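/- arXiv:2502.11373 — 3 statements merged into one kernel-verified Lean document; each statement's English description precedes it below -/
import Mathlib

section
/- Let N ≥ 3, 1 ≤ k < N, and L > 0. If u : ℝ^N → ℝ is bounded and harmonic (Δu = 0), is L-periodic in each of its first k variables, and satisfies u(y',y'') → 0 as |y''| → ∞, then u ≡ 0. Consequently, any two bounded solutions of the same Poisson problem -Δu = f in Ω subject to the periodic boundary conditions coincide, so bounded solutions of such problems are unique. -/
open Real MeasureTheory Filter Topology
open scoped Classical

noncomputable section

namespace PeriodicCriticalSystem

/-- Euclidean space `ℝ^N`. -/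
abbrev Euc (N : ℕ) : Type := EuclideanSpace ℝ (Fin N)

/-- The `i`-th standard coordinate vector `e_i`. -/
def e (N : ℕ) (i : Fin N) : Euc N := EuclideanSpace.single i 1

/-- The strip `Ω = {y : |y_i| ≤ L/2, i = 1,…,k}`. -/
def strip (N k : ℕ) (L : ℝ) : Set (Euc N) :=
  {y : Euc N | ∀ i : Fin N, (i : ℕ) < k → |y i| ≤ L / 2}

/-- The `i`-th partial derivative. -/
def pd {N : ℕ} (i : Fin N) (u : Euc N → ℝ) (y : Euc N) : ℝ := fderiv ℝ u y (e N i)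

/-- The Laplacian `Δu = Σ_i ∂²u/∂y_i²`. -/
def lap {N : ℕ} (u : Euc N → ℝ) (y : Euc N) : ℝ :=
  ∑ i : Fin N, iteratedDeriv 2 (fun t : ℝ => u (y + t • e N i)) 0

/-- The norm `|y''|` of the last `N - k` coordinates. -/
def tailNorm {N : ℕ} (k : ℕ) (y : Euc N) : ℝ :=
  Real.sqrt (∑ i : Fin N, if k ≤ (i : ℕ) then (y i) ^ 2 else 0)

/-- The periodic boundary conditions on the strip, together with decay as `|y''| → ∞`. -/
structure PeriodicBC (N k : ℕ) (L : ℝ) (u : Euc N → ℝ) : Prop where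
  per : ∀ i : Fin N, (i : ℕ) < k → ∀ y : Euc N, y i = -(L / 2) → u (y + L • e N i) = u y
  per_deriv : ∀ i : Fin N, (i : ℕ) < k → ∀ y : Euc N, y i = -(L / 2) →
    pd i u (y + L • e N i) = pd i u y
  decay : ∀ ε : ℝ, 0 < ε → ∃ R : ℝ, ∀ y ∈ strip N k L, R ≤ tailNorm k y → |u y| < ε

/-- The critical Sobolev exponent `2* = 2N/(N-2)`. -/
def tS (N : ℕ) : ℝ := 2 * (N : ℝ) / ((N : ℝ) - 2)

/-- Conditions (A₁) and (A₂) on a coefficient function `K`. -/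
structure CondA (N k : ℕ) (K : Euc N → ℝ) (a β : Fin N → ℝ) (βm βM σ : ℝ) : Prop where
  periodic : ∀ i : Fin N, (i : ℕ) < k → ∀ y : Euc N, K (y + e N i) = K y
  bounded : ∃ M : ℝ, ∀ y : Euc N, |K y| ≤ M
  a_ne : ∀ i : Fin N, a i ≠ 0
  β_gt : ∀ i : Fin N, (N : ℝ) - 2 < β i
  β_lt : ∀ i : Fin N, β i < (N : ℝ)
  βm_le : ∀ i : Fin N, βm ≤ β i
  βm_mem : ∃ i : Fin N, β i = βm
  le_βM : ∀ i : Fin N, β i ≤ βM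
  βM_mem : ∃ i : Fin N, β i = βM
  βM_le : βM ≤ βm * (1 + 1 / ((N : ℝ) - 2))
  σ_pos : 0 < σ
  expansion : ∃ δ C : ℝ, 0 < δ ∧ 0 < C ∧ ∀ x : Euc N, ‖x‖ < δ →
    |K x - 1 - ∑ i : Fin N, a i * |x i| ^ (β i)| ≤ C * ‖x‖ ^ (βM + σ)
  neg_sum : (∑ i ∈ Finset.univ.filter (fun i => β i = βm), a i) < 0

/-- The standard bubble `W_{x,μ}`. -/
def Wb (N : ℕ) (x : Euc N) (μ : ℝ) (y : Euc N) : ℝ :=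
  ((N : ℝ) * ((N : ℝ) - 2)) ^ (((N : ℝ) - 2) / 4) * μ ^ (((N : ℝ) - 2) / 2) /
    (1 + μ ^ 2 * ‖y - x‖ ^ 2) ^ (((N : ℝ) - 2) / 2)

/-- The synchronized bubble `U_{x,μ} = s W_{x,μ}`. -/
def Ub (N : ℕ) (s : ℝ) (x : Euc N) (μ : ℝ) (y : Euc N) : ℝ := s * Wb N x μ y

/-- The synchronized bubble `V_{x,μ} = κ s W_{x,μ}`. -/
def Vb (N : ℕ) (s κ : ℝ) (x : Euc N) (μ : ℝ) (y : Euc N) : ℝ := κ * s * Wb N x μ y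

/-- The algebraic relations defining the synchronization constants `s` and `κ`. -/
def SyncConst (N : ℕ) (s κ : ℝ) : Prop :=
  0 < s ∧ 0 < κ ∧ s ^ (tS N - 2) = 2 / (2 + κ ^ (tS N / 2)) ∧
    2 + κ ^ (tS N / 2) - κ ^ (tS N / 2 - 1) - 2 * κ ^ (tS N - 1) = 0

/-- The lattice `Q_k` of integer points in the first `k` coordinates. -/
def Qlat (N k : ℕ) : Set (Euc N) :=
  {y : Euc N | (∀ i : Fin N, ∃ m : ℤ, y i = (m : ℝ)) ∧ ∀ i : Fin N, k ≤ (i : ℕ) → y i = 0}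

/-- `P` enumerates the lattice `Q_k` with `P 0 = 0`. -/
def LatticeEnum (N k : ℕ) (P : ℕ → Euc N) : Prop :=
  Function.Injective P ∧ Set.range P = Qlat N k ∧ P 0 = 0

/-- The area `ω_{N-1}` of the unit sphere `S^{N-1}`. -/
def sphereArea (N : ℕ) : ℝ := (N : ℝ) * (volume (Metric.ball (0 : Euc N) 1)).toReal

/-- The fundamental solution `Γ(y,z)` of `-Δ`. -/
def Γfun (N : ℕ) (y z : Euc N) : ℝ :=
  1 / (((N : ℝ) - 2) * sphereArea N * ‖y - z‖ ^ ((N : ℝ) - 2))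

/-- The Green's function of `-Δ` on the strip with periodic boundary conditions. -/
def Green (N : ℕ) (L : ℝ) (P : ℕ → Euc N) (y z : Euc N) : ℝ :=
  ∑' j : ℕ, Γfun N (y + L • P j) z

/-- The projected bubble `PU_{x,μ}`. -/
def PU (N k : ℕ) (L : ℝ) (P : ℕ → Euc N) (s κ : ℝ) (x : Euc N) (μ : ℝ) (y : Euc N) : ℝ :=
  ∫ z in strip N k L, Green N L P y z *
    (Ub N s x μ z ^ (tS N - 1) +
      (1 / 2) * Ub N s x μ z ^ (tS N / 2 - 1) * Vb N s κ x μ z ^ (tS N / 2))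

/-- The projected bubble `PV_{x,μ}`. -/
def PV (N k : ℕ) (L : ℝ) (P : ℕ → Euc N) (s κ : ℝ) (x : Euc N) (μ : ℝ) (y : Euc N) : ℝ :=
  ∫ z in strip N k L, Green N L P y z *
    (Vb N s κ x μ z ^ (tS N - 1) +
      (1 / 2) * Vb N s κ x μ z ^ (tS N / 2 - 1) * Ub N s x μ z ^ (tS N / 2))

/-- The translated centers `x_j = x - L P_j`. -/
def xc {N : ℕ} (L : ℝ) (P : ℕ → Euc N) (x : Euc N) (j : ℕ) : Euc N := x - L • P j

/-- The extra weight `σ(y)`. -/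
def σw {N : ℕ} (x : Euc N) (μ τ : ℝ) (y : Euc N) : ℝ :=
  min 1 (((1 + μ * ‖y - x‖) / μ) ^ (τ - 1))

/-- The weight defining the `*` norm. -/
def wStar (N : ℕ) (L : ℝ) (P : ℕ → Euc N) (x : Euc N) (μ τ : ℝ) (y : Euc N) : ℝ :=
  σw x μ τ y *
    ∑' j : ℕ, μ ^ (((N : ℝ) - 2) / 2) / (1 + μ * ‖y - xc L P x j‖) ^ (((N : ℝ) - 2) / 2 + τ)

/-- The weight defining the `**` norm. -/
def wStarStar (N : ℕ) (L : ℝ) (P : ℕ → Euc N) (x : Euc N) (μ τ : ℝ) (y : Euc N) : ℝ :=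
  σw x μ τ y *
    ∑' j : ℕ, μ ^ (((N : ℝ) + 2) / 2) / (1 + μ * ‖y - xc L P x j‖) ^ (((N : ℝ) + 2) / 2 + τ)

/-- The `*` norm. -/
def normStar (N k : ℕ) (L : ℝ) (P : ℕ → Euc N) (x : Euc N) (μ τ : ℝ) (u : Euc N → ℝ) : ℝ :=
  sSup ((fun y => |u y| / wStar N L P x μ τ y) '' strip N k L)

/-- The `**` norm. -/
def normStarStar (N k : ℕ) (L : ℝ) (P : ℕ → Euc N) (x : Euc N) (μ τ : ℝ) (f : Euc N → ℝ) : ℝ :=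
  sSup ((fun y => |f y| / wStarStar N L P x μ τ y) '' strip N k L)

/-- Finiteness of the `*` norm. -/
def FiniteStar (N k : ℕ) (L : ℝ) (P : ℕ → Euc N) (x : Euc N) (μ τ : ℝ) (u : Euc N → ℝ) : Prop :=
  BddAbove ((fun y => |u y| / wStar N L P x μ τ y) '' strip N k L)

/-- Finiteness of the `**` norm. -/
def FiniteStarStar (N k : ℕ) (L : ℝ) (P : ℕ → Euc N) (x : Euc N) (μ τ : ℝ)
    (f : Euc N → ℝ) : Prop :=
  BddAbove ((fun y => |f y| / wStarStar N L P x μ τ y) '' strip N k L)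

/-- Membership of a pair in the space `X`. -/
def MemX (N k : ℕ) (L : ℝ) (P : ℕ → Euc N) (x : Euc N) (μ τ : ℝ) (u v : Euc N → ℝ) : Prop :=
  PeriodicBC N k L u ∧ PeriodicBC N k L v ∧
    FiniteStar N k L P x μ τ u ∧ FiniteStar N k L P x μ τ v

/-- Membership of a pair in the space `Y`. -/
def MemY (N k : ℕ) (L : ℝ) (P : ℕ → Euc N) (x : Euc N) (μ τ : ℝ) (f g : Euc N → ℝ) : Prop :=
  FiniteStarStar N k L P x μ τ f ∧ FiniteStarStar N k L P x μ τ g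

/-- The operator `(-Δ)^{-1}` given by the Green's function. -/
def invLap (N k : ℕ) (L : ℝ) (P : ℕ → Euc N) (f : Euc N → ℝ) (y : Euc N) : ℝ :=
  ∫ z in strip N k L, Green N L P z y * f z

/-- `Y_h`: derivatives of `U_{x,μ}` in `x_h` (`h < N`) and in `μ` (`h = N+1`). -/
def Yd (N : ℕ) (s : ℝ) (x : Euc N) (μ : ℝ) (h : Fin (N + 1)) (y : Euc N) : ℝ :=
  if hh : (h : ℕ) < N then fderiv ℝ (fun x' => Ub N s x' μ y) x (e N ⟨(h : ℕ), hh⟩)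
  else deriv (fun μ' => Ub N s x μ' y) μ

/-- `Z_h`: derivatives of `V_{x,μ}`. -/
def Zd (N : ℕ) (s κ : ℝ) (x : Euc N) (μ : ℝ) (h : Fin (N + 1)) (y : Euc N) : ℝ :=
  if hh : (h : ℕ) < N then fderiv ℝ (fun x' => Vb N s κ x' μ y) x (e N ⟨(h : ℕ), hh⟩)
  else deriv (fun μ' => Vb N s κ x μ' y) μ

/-- `∂_h PU_{x,μ}`. -/
def dPU (N k : ℕ) (L : ℝ) (P : ℕ → Euc N) (s κ : ℝ) (x : Euc N) (μ : ℝ) (h : Fin (N + 1))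
    (y : Euc N) : ℝ :=
  if hh : (h : ℕ) < N then fderiv ℝ (fun x' => PU N k L P s κ x' μ y) x (e N ⟨(h : ℕ), hh⟩)
  else deriv (fun μ' => PU N k L P s κ x μ' y) μ

/-- `∂_h PV_{x,μ}`. -/
def dPV (N k : ℕ) (L : ℝ) (P : ℕ → Euc N) (s κ : ℝ) (x : Euc N) (μ : ℝ) (h : Fin (N + 1))
    (y : Euc N) : ℝ :=
  if hh : (h : ℕ) < N then fderiv ℝ (fun x' => PV N k L P s κ x' μ y) x (e N ⟨(h : ℕ), hh⟩)
  else deriv (fun μ' => PV N k L P s κ x μ' y) μ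

/-- `α(h) = 1` for `h = 1,…,N` and `α(N+1) = -1`. -/
def αe (N : ℕ) (h : Fin (N + 1)) : ℝ := if (h : ℕ) < N then 1 else -1

/-- Membership of a pair in the space `E`. -/
def MemE (N k : ℕ) (L : ℝ) (P : ℕ → Euc N) (s κ : ℝ) (x : Euc N) (μ τ : ℝ)
    (u v : Euc N → ℝ) : Prop :=
  MemX N k L P x μ τ u v ∧
    (∀ h : Fin (N + 1),
      (∫ y in strip N k L, u y * Ub N s x μ y ^ (tS N - 2) * Yd N s x μ h y) = 0) ∧
    (∀ h : Fin (N + 1),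
      (∫ y in strip N k L, v y * Vb N s κ x μ y ^ (tS N - 2) * Zd N s κ x μ h y) = 0)

/-- Membership of a pair in the space `F`. -/
def MemF (N k : ℕ) (L : ℝ) (P : ℕ → Euc N) (s κ : ℝ) (x : Euc N) (μ : ℝ)
    (f g : Euc N → ℝ) : Prop :=
  (∀ h : Fin (N + 1), (∫ y in strip N k L, f y * dPU N k L P s κ x μ h y) = 0) ∧
  (∀ h : Fin (N + 1), (∫ y in strip N k L, g y * dPV N k L P s κ x μ h y) = 0)

/-- The admissible range of the parameters `(x, μ)` relative to `L`. -/
def Admissible (N : ℕ) (θ C0 β : ℝ) (L : ℝ) (x : Euc N) (μ : ℝ) : Prop :=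
  1 ≤ μ ∧ 1 ≤ L ∧ ‖x‖ ≤ μ ^ (-(1 + θ)) ∧
    μ * L ^ (-(((N : ℝ) - 2) / (β - ((N : ℝ) - 2)))) ∈ Set.Icc (C0 / 2) (2 * C0)

/-- First component of the linearized operator. -/
def lin1 (N k : ℕ) (L : ℝ) (P : ℕ → Euc N) (s κ : ℝ) (K1 : Euc N → ℝ) (x : Euc N) (μ : ℝ)
    (ω1 ω2 : Euc N → ℝ) (y : Euc N) : ℝ :=
  K1 y * PU N k L P s κ x μ y ^ (tS N - 2) * ω1 y -
    (1 / ((N : ℝ) + 2)) * PU N k L P s κ x μ y ^ ((4 - (N : ℝ)) / ((N : ℝ) - 2)) *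
      PV N k L P s κ x μ y ^ ((N : ℝ) / ((N : ℝ) - 2)) * ω1 y -
    ((N : ℝ) / (2 * ((N : ℝ) + 2))) * PU N k L P s κ x μ y ^ (2 / ((N : ℝ) - 2)) *
      PV N k L P s κ x μ y ^ (2 / ((N : ℝ) - 2)) * ω2 y

/-- Second component of the linearized operator. -/
def lin2 (N k : ℕ) (L : ℝ) (P : ℕ → Euc N) (s κ : ℝ) (K2 : Euc N → ℝ) (x : Euc N) (μ : ℝ)
    (ω1 ω2 : Euc N → ℝ) (y : Euc N) : ℝ :=
  K2 y * PV N k L P s κ x μ y ^ (tS N - 2) * ω2 y -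
    (1 / ((N : ℝ) + 2)) * PV N k L P s κ x μ y ^ ((4 - (N : ℝ)) / ((N : ℝ) - 2)) *
      PU N k L P s κ x μ y ^ ((N : ℝ) / ((N : ℝ) - 2)) * ω2 y -
    ((N : ℝ) / (2 * ((N : ℝ) + 2))) * PV N k L P s κ x μ y ^ (2 / ((N : ℝ) - 2)) *
      PU N k L P s κ x μ y ^ (2 / ((N : ℝ) - 2)) * ω1 y

/-- First component `ℓ₁` of the error term. -/
def ell1 (N k : ℕ) (L : ℝ) (P : ℕ → Euc N) (s κ : ℝ) (K1 : Euc N → ℝ) (x : Euc N) (μ : ℝ)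
    (y : Euc N) : ℝ :=
  K1 y * PU N k L P s κ x μ y ^ (tS N - 1) - Ub N s x μ y ^ (tS N - 1) -
    (1 / 2) * (Ub N s x μ y ^ (tS N / 2 - 1) * Vb N s κ x μ y ^ (tS N / 2) -
      PU N k L P s κ x μ y ^ (tS N / 2 - 1) * PV N k L P s κ x μ y ^ (tS N / 2))

/-- Second component `ℓ₂` of the error term. -/
def ell2 (N k : ℕ) (L : ℝ) (P : ℕ → Euc N) (s κ : ℝ) (K2 : Euc N → ℝ) (x : Euc N) (μ : ℝ)
    (y : Euc N) : ℝ :=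
  K2 y * PV N k L P s κ x μ y ^ (tS N - 1) - Vb N s κ x μ y ^ (tS N - 1) -
    (1 / 2) * (Vb N s κ x μ y ^ (tS N / 2 - 1) * Ub N s x μ y ^ (tS N / 2) -
      PV N k L P s κ x μ y ^ (tS N / 2 - 1) * PU N k L P s κ x μ y ^ (tS N / 2))

/-- First component `N₁` of the higher order term. -/
def Nl1 (N k : ℕ) (L : ℝ) (P : ℕ → Euc N) (s κ : ℝ) (K1 : Euc N → ℝ) (x : Euc N) (μ : ℝ)
    (ω1 ω2 : Euc N → ℝ) (y : Euc N) : ℝ :=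
  K1 y * ((max (PU N k L P s κ x μ y + ω1 y) 0) ^ (tS N - 1) -
      PU N k L P s κ x μ y ^ (tS N - 1) -
      (tS N - 1) * PU N k L P s κ x μ y ^ (tS N - 2) * ω1 y) +
    (1 / 2) * ((PU N k L P s κ x μ y + ω1 y) ^ (2 / ((N : ℝ) - 2)) *
        (PV N k L P s κ x μ y + ω2 y) ^ ((N : ℝ) / ((N : ℝ) - 2)) -
      PU N k L P s κ x μ y ^ (2 / ((N : ℝ) - 2)) *
        PV N k L P s κ x μ y ^ ((N : ℝ) / ((N : ℝ) - 2))) -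
    (1 / ((N : ℝ) - 2)) * PU N k L P s κ x μ y ^ ((4 - (N : ℝ)) / ((N : ℝ) - 2)) *
      PV N k L P s κ x μ y ^ ((N : ℝ) / ((N : ℝ) - 2)) * ω1 y -
    ((N : ℝ) / (2 * ((N : ℝ) - 2))) * PU N k L P s κ x μ y ^ (2 / ((N : ℝ) - 2)) *
      PV N k L P s κ x μ y ^ (2 / ((N : ℝ) - 2)) * ω2 y

/-- Second component `N₂` of the higher order term. -/
def Nl2 (N k : ℕ) (L : ℝ) (P : ℕ → Euc N) (s κ : ℝ) (K2 : Euc N → ℝ) (x : Euc N) (μ : ℝ)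
    (ω1 ω2 : Euc N → ℝ) (y : Euc N) : ℝ :=
  K2 y * ((max (PV N k L P s κ x μ y + ω2 y) 0) ^ (tS N - 1) -
      PV N k L P s κ x μ y ^ (tS N - 1) -
      (tS N - 1) * PV N k L P s κ x μ y ^ (tS N - 2) * ω2 y) +
    (1 / 2) * ((PV N k L P s κ x μ y + ω2 y) ^ (2 / ((N : ℝ) - 2)) *
        (PU N k L P s κ x μ y + ω1 y) ^ ((N : ℝ) / ((N : ℝ) - 2)) -
      PV N k L P s κ x μ y ^ (2 / ((N : ℝ) - 2)) *
        PU N k L P s κ x μ y ^ ((N : ℝ) / ((N : ℝ) - 2))) -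
    (1 / ((N : ℝ) - 2)) * PV N k L P s κ x μ y ^ ((4 - (N : ℝ)) / ((N : ℝ) - 2)) *
      PU N k L P s κ x μ y ^ ((N : ℝ) / ((N : ℝ) - 2)) * ω2 y -
    ((N : ℝ) / (2 * ((N : ℝ) - 2))) * PV N k L P s κ x μ y ^ (2 / ((N : ℝ) - 2)) *
      PU N k L P s κ x μ y ^ (2 / ((N : ℝ) - 2)) * ω1 y



section LiouvilleHelpers

open Set

variable {N k : ℕ}

private lemma right_deriv_nonpos {g : ℝ → ℝ} {δ : ℝ} (hδ : 0 < δ)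
    (hmax : ∀ t ∈ Set.Icc (0:ℝ) δ, g t ≤ g 0) (hg : DifferentiableAt ℝ g 0) :
    deriv g 0 ≤ 0 := by
  have h := hg.hasDerivAt
  rw [hasDerivAt_iff_tendsto_slope] at h
  have h2 : Tendsto (slope g 0) (𝓝[>] (0:ℝ)) (𝓝 (deriv g 0)) :=
    h.mono_left (nhdsWithin_mono _ (fun t ht => ne_of_gt ht))
  refine le_of_tendsto h2 ?_
  filter_upwards [Ioc_mem_nhdsGT_of_mem ⟨le_rfl, hδ⟩] with t ht
  rw [slope_def_field]
  apply div_nonpos_of_nonpos_of_nonneg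
  · have := hmax t ⟨le_of_lt ht.1, ht.2⟩; linarith
  · linarith [ht.1]

private lemma left_deriv_nonneg {g : ℝ → ℝ} {δ : ℝ} (hδ : 0 < δ)
    (hmax : ∀ t ∈ Set.Icc (-δ) (0:ℝ), g t ≤ g 0) (hg : DifferentiableAt ℝ g 0) :
    0 ≤ deriv g 0 := by
  have h := hg.hasDerivAt
  rw [hasDerivAt_iff_tendsto_slope] at h
  have h2 : Tendsto (slope g 0) (𝓝[<] (0:ℝ)) (𝓝 (deriv g 0)) :=
    h.mono_left (nhdsWithin_mono _ (fun t ht => ne_of_lt ht))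
  refine ge_of_tendsto h2 ?_
  filter_upwards [Ico_mem_nhdsLT (by linarith : -δ < (0:ℝ))] with t ht
  rw [slope_def_field]
  apply div_nonneg_of_nonpos
  · have := hmax t ⟨ht.1, le_of_lt ht.2⟩; linarith
  · linarith [ht.2]

private lemma second_deriv_test_right {g : ℝ → ℝ} {δ : ℝ} (hδ : 0 < δ) (hg : ContDiff ℝ 2 g)
    (hmax : ∀ t ∈ Set.Icc (0:ℝ) δ, g t ≤ g 0) (hd : deriv g 0 = 0) :
    iteratedDeriv 2 g 0 ≤ 0 := by
  by_contra hpos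
  push_neg at hpos
  have hg' : ContDiff ℝ 1 (deriv g) := by
    have := (contDiff_succ_iff_deriv (n := 1)).mp (by exact_mod_cast hg)
    exact this.2.2
  have hgd : Differentiable ℝ g := hg.differentiable (by norm_num)
  have hdd : DifferentiableAt ℝ (deriv g) 0 := (hg'.differentiable (by norm_num)) 0
  have hiter : deriv (deriv g) 0 = iteratedDeriv 2 g 0 := by
    rw [iteratedDeriv_succ, iteratedDeriv_one]
  have h := hdd.hasDerivAt
  rw [hasDerivAt_iff_tendsto_slope, hiter] at h
  have hev : ∀ᶠ t in 𝓝[≠] (0:ℝ), 0 < slope (deriv g) 0 t :=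
    h.eventually (eventually_gt_nhds hpos)
  rw [eventually_nhdsWithin_iff, Metric.eventually_nhds_iff] at hev
  obtain ⟨ε, hε, hev⟩ := hev
  set b := min (ε/2) δ with hb
  have hb0 : 0 < b := lt_min (by linarith) hδ
  have hmono : StrictMonoOn g (Set.Icc 0 b) := by
    apply strictMonoOn_of_deriv_pos (convex_Icc _ _) (hgd.continuous.continuousOn)
    intro t ht
    rw [interior_Icc] at ht
    have htε : dist t 0 < ε := by
      rw [Real.dist_eq, sub_zero, abs_of_pos ht.1]
      calc t < b := ht.2
        _ ≤ ε/2 := min_le_left _ _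
        _ < ε := by linarith
    have := hev htε (ne_of_gt ht.1)
    rw [slope_def_field, hd, sub_zero, sub_zero] at this
    have := mul_pos this ht.1
    rwa [div_mul_cancel₀] at this
    exact ne_of_gt ht.1
  have h1 : g 0 < g b := hmono ⟨le_rfl, le_of_lt hb0⟩ ⟨le_of_lt hb0, le_rfl⟩ hb0
  have h2 : g b ≤ g 0 := hmax b ⟨le_of_lt hb0, min_le_right _ _⟩
  linarith

lemma euc_line_apply (z : Euc N) (t : ℝ) (i j : Fin N) :
    (z + t • e N i) j = z j + t * (if j = i then 1 else 0) := by
  simp [e, PiLp.add_apply, PiLp.smul_apply, EuclideanSpace.single_apply, smul_eq_mul]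

lemma euc_line_apply_self (z : Euc N) (t : ℝ) (i : Fin N) : (z + t • e N i) i = z i + t := by
  rw [euc_line_apply]; simp

lemma euc_line_apply_ne (z : Euc N) (t : ℝ) {i j : Fin N} (h : j ≠ i) :
    (z + t • e N i) j = z j := by
  rw [euc_line_apply]; simp [h]

private lemma tail_poly_bound {c t D : ℝ} (hD : 0 < D) (h1 : |t| ≤ 1)
    (h2 : |t| ≤ D / (2 * |c| + 1)) : 2 * c * t + t ^ 2 ≤ D := by
  have hposd : (0:ℝ) < 2*|c|+1 := by positivity
  have h3 : |t| * (2*|c|+1) ≤ D := by rw [← le_div_iff₀ hposd]; exact h2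
  have e1 : 2 * c * t ≤ 2 * (|c| * |t|) := by
    have habs := le_abs_self (c * t)
    rw [abs_mul] at habs
    linarith
  have e2 : t^2 ≤ |t| := by
    rw [← sq_abs]
    nlinarith [abs_nonneg t]
  nlinarith [e1, e2, h3]

/-- The square of the tail norm. -/
def qf (k : ℕ) {N : ℕ} (y : Euc N) : ℝ := ∑ i : Fin N, if k ≤ (i : ℕ) then (y i)^2 else 0

lemma tailNorm_eq_qf (y : Euc N) : tailNorm k y = Real.sqrt (qf k y) := rfl

lemma qf_nonneg (y : Euc N) : 0 ≤ qf k y := by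
  apply Finset.sum_nonneg
  intro i _
  by_cases h : k ≤ (i:ℕ) <;> simp [h]
  positivity

lemma qf_line (z : Euc N) (t : ℝ) (i : Fin N) :
    qf k (z + t • e N i) = qf k z + (if k ≤ (i:ℕ) then 2 * z i * t + t^2 else 0) := by
  have hterm : ∀ j : Fin N,
      (if k ≤ (j:ℕ) then ((z + t • e N i) j)^2 else 0)
        = (if k ≤ (j:ℕ) then (z j)^2 else 0)
          + (if j = i then (if k ≤ (i:ℕ) then 2 * z i * t + t^2 else 0) else 0) := by
    intro j
    rcases eq_or_ne j i with rfl | hne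
    · rw [euc_line_apply]
      by_cases h : k ≤ (j:ℕ) <;> simp [h] <;> ring
    · rw [euc_line_apply]
      simp [hne]
  unfold qf
  rw [Finset.sum_congr rfl fun j _ => hterm j, Finset.sum_add_distrib]
  simp

lemma contDiff_line {u : Euc N → ℝ} (hu : ContDiff ℝ 2 u) (z v : Euc N) :
    ContDiff ℝ 2 fun t : ℝ => u (z + t • v) :=
  hu.comp (contDiff_const.add (contDiff_id.smul contDiff_const))

lemma hasDerivAt_line {u : Euc N → ℝ} (hu : Differentiable ℝ u) (z v : Euc N) (t₀ : ℝ) :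
    HasDerivAt (fun t : ℝ => u (z + t • v)) (fderiv ℝ u (z + t₀ • v) v) t₀ := by
  have h1 : HasDerivAt (fun t : ℝ => z + t • v) v t₀ := by
    simpa using ((hasDerivAt_id t₀).smul_const v).const_add z
  exact (hu (z + t₀ • v)).hasFDerivAt.comp_hasDerivAt t₀ h1

lemma hasDerivAt_line_zero {u : Euc N → ℝ} (hu : Differentiable ℝ u) (z v : Euc N) :
    HasDerivAt (fun t : ℝ => u (z + t • v)) (fderiv ℝ u z v) 0 := by
  have := hasDerivAt_line hu z v 0
  rwa [zero_smul, add_zero] at this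

lemma iter2_decomp {A : ℝ → ℝ} (hA : ContDiff ℝ 2 A) (a b c : ℝ) :
    iteratedDeriv 2 (fun t => A t + (a + (b * t + c * t ^ 2))) 0
      = iteratedDeriv 2 A 0 + 2 * c := by
  have hdA : Differentiable ℝ A := hA.differentiable (by norm_num)
  have hA' : ContDiff ℝ 1 (deriv A) :=
    ((contDiff_succ_iff_deriv (n := 1)).mp (by exact_mod_cast hA)).2.2
  have hpoly : ∀ t : ℝ, HasDerivAt (fun s : ℝ => a + (b * s + c * s ^ 2)) (b + c * (2 * t)) t := by
    intro t
    have h2 : HasDerivAt (fun s : ℝ => s ^ 2) (2 * t) t := by simpa using hasDerivAt_pow 2 t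
    simpa using (((hasDerivAt_id t).const_mul b).add (h2.const_mul c)).const_add a
  have hd1 : deriv (fun t => A t + (a + (b * t + c * t ^ 2)))
      = fun t => deriv A t + (b + c * (2 * t)) := by
    funext t
    exact ((hdA t).hasDerivAt.add (hpoly t)).deriv
  have h2 : HasDerivAt (fun t : ℝ => b + c * (2 * t)) (c * 2) 0 := by
    simpa using (((hasDerivAt_id (0:ℝ)).const_mul (2:ℝ)).const_mul c).const_add b
  rw [iteratedDeriv_succ, iteratedDeriv_one, iteratedDeriv_succ, iteratedDeriv_one, hd1]
  rw [show deriv (fun t => deriv A t + (b + c * (2 * t))) 0 = deriv (deriv A) 0 + c * 2 from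
    (((hA'.differentiable (by norm_num)) 0).hasDerivAt.add h2).deriv]
  ring

lemma iter2_add_const {A : ℝ → ℝ} (hA : ContDiff ℝ 2 A) (a : ℝ) :
    iteratedDeriv 2 (fun t => A t + a) 0 = iteratedDeriv 2 A 0 := by
  have := iter2_decomp hA a 0 0
  simpa using this

lemma iter2_sub {A B : ℝ → ℝ} (hA : ContDiff ℝ 2 A) (hB : ContDiff ℝ 2 B) :
    iteratedDeriv 2 (fun t => A t - B t) 0 = iteratedDeriv 2 A 0 - iteratedDeriv 2 B 0 := by
  have hdA : Differentiable ℝ A := hA.differentiable (by norm_num)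
  have hdB : Differentiable ℝ B := hB.differentiable (by norm_num)
  have hA' : ContDiff ℝ 1 (deriv A) :=
    ((contDiff_succ_iff_deriv (n := 1)).mp (by exact_mod_cast hA)).2.2
  have hB' : ContDiff ℝ 1 (deriv B) :=
    ((contDiff_succ_iff_deriv (n := 1)).mp (by exact_mod_cast hB)).2.2
  have hd1 : deriv (fun t => A t - B t) = fun t => deriv A t - deriv B t := by
    funext t; exact ((hdA t).hasDerivAt.sub (hdB t).hasDerivAt).deriv
  rw [iteratedDeriv_succ, iteratedDeriv_one, iteratedDeriv_succ, iteratedDeriv_one,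
    iteratedDeriv_succ, iteratedDeriv_one, hd1]
  exact (((hA'.differentiable (by norm_num) 0).hasDerivAt).sub
    ((hB'.differentiable (by norm_num) 0).hasDerivAt)).deriv

lemma lap_sub {u₁ u₂ : Euc N → ℝ} (h₁ : ContDiff ℝ 2 u₁) (h₂ : ContDiff ℝ 2 u₂) (y : Euc N) :
    lap (fun w => u₁ w - u₂ w) y = lap u₁ y - lap u₂ y := by
  unfold lap
  rw [← Finset.sum_sub_distrib]
  exact Finset.sum_congr rfl fun i _ =>
    iter2_sub (contDiff_line h₁ y (e N i)) (contDiff_line h₂ y (e N i))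

lemma lap_neg (u : Euc N → ℝ) (y : Euc N) : lap (fun w => -(u w)) y = - lap u y := by
  unfold lap
  rw [← Finset.sum_neg_distrib]
  exact Finset.sum_congr rfl fun i _ => iteratedDeriv_neg 2 _ 0

lemma pd_sub {u₁ u₂ : Euc N → ℝ} (h₁ : ContDiff ℝ 2 u₁) (h₂ : ContDiff ℝ 2 u₂) (i : Fin N)
    (y : Euc N) : pd i (fun w => u₁ w - u₂ w) y = pd i u₁ y - pd i u₂ y := by
  unfold pd
  rw [fderiv_fun_sub ((h₁.differentiable (by norm_num)) y) ((h₂.differentiable (by norm_num)) y)]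
  rfl

lemma pd_neg (u : Euc N → ℝ) (i : Fin N) (y : Euc N) :
    pd i (fun w => -(u w)) y = -(pd i u y) := by
  unfold pd
  rw [fderiv_fun_neg]
  rfl

lemma isClosed_strip (L : ℝ) : IsClosed (strip N k L) := by
  have hrw : strip N k L = ⋂ i : Fin N, {y : Euc N | (i:ℕ) < k → |y i| ≤ L/2} := by
    ext y; simp [strip, Set.mem_iInter]
  rw [hrw]
  refine isClosed_iInter fun i => ?_
  by_cases h : (i:ℕ) < k
  · have : {y : Euc N | (i:ℕ) < k → |y i| ≤ L/2} = {y : Euc N | |y i| ≤ L/2} := by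
      ext y; simp [h]
    rw [this]
    exact isClosed_le ((EuclideanSpace.proj (𝕜 := ℝ) i).continuous.abs) continuous_const
  · have : {y : Euc N | (i:ℕ) < k → |y i| ≤ L/2} = Set.univ := by
      ext y; simp [h]
    rw [this]
    exact isClosed_univ

end LiouvilleHelpers


section LiouvilleCore

open Set

set_option maxHeartbeats 2000000 in
/-- Maximum-principle core: a `C²` function, harmonic on the strip, satisfying the periodic
boundary conditions and decaying in the tail variables, is nonpositive on the strip. -/
lemma core_nonpos (N k : ℕ) (hk2 : k < N) (L : ℝ) (hL : 0 < L) (u : Euc N → ℝ)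
    (hu : ContDiff ℝ 2 u)
    (hlap : ∀ y ∈ strip N k L, lap u y = 0)
    (hper : ∀ i : Fin N, (i : ℕ) < k → ∀ y : Euc N, y i = -(L / 2) → u (y + L • e N i) = u y)
    (hperd : ∀ i : Fin N, (i : ℕ) < k → ∀ y : Euc N, y i = -(L / 2) →
      pd i u (y + L • e N i) = pd i u y)
    (hdecay : ∀ ε : ℝ, 0 < ε → ∃ R : ℝ, ∀ y ∈ strip N k L, R ≤ tailNorm k y → |u y| < ε) :
    ∀ y ∈ strip N k L, u y ≤ 0 := by
  intro ystar hystar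
  by_contra hm0
  push_neg at hm0
  set m := u ystar with hmdef
  obtain ⟨R₀, hR₀⟩ := hdecay (m / 2) (by linarith)
  set R : ℝ := max (max R₀ 1) (tailNorm k ystar) with hRdef
  have hR1 : (1:ℝ) ≤ R := le_trans (le_max_right R₀ 1) (le_max_left _ _)
  have hRpos : 0 < R := lt_of_lt_of_le one_pos hR1
  have hRR₀ : R₀ ≤ R := le_trans (le_max_left R₀ 1) (le_max_left _ _)
  have hRy : tailNorm k ystar ≤ R := le_max_right _ _
  set ε : ℝ := m / (4 * R ^ 2) with hεdef
  have hε : 0 < ε := div_pos hm0 (by positivity)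
  have hRne : R ≠ 0 := ne_of_gt hRpos
  have hεR : ε * R ^ 2 = m / 4 := by
    rw [hεdef]; field_simp
  set φ : Euc N → ℝ := fun y => u y + ε * qf k y with hφdef
  have hcoord : ∀ i : Fin N, Continuous fun y : Euc N => y i := fun i =>
    (EuclideanSpace.proj (𝕜 := ℝ) i).continuous
  have hcontq : Continuous fun y : Euc N => qf k y := by
    apply continuous_finset_sum
    intro i _
    by_cases h : k ≤ (i:ℕ)
    · simp only [if_pos h]; exact (hcoord i).pow 2
    · simp only [if_neg h]; exact continuous_const
  have hφc : Continuous φ := (hu.continuous).add (continuous_const.mul hcontq)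
  set K : Set (Euc N) := strip N k L ∩ {y | qf k y ≤ R ^ 2} with hKdef
  have hKclosed : IsClosed K :=
    (isClosed_strip L).inter (isClosed_le hcontq continuous_const)
  have hKbdd : Bornology.IsBounded K := by
    apply (Metric.isBounded_closedBall
      (x := (0 : Euc N)) (r := Real.sqrt ((N:ℝ) * (L/2)^2 + R^2))).subset
    intro y hy
    rw [Metric.mem_closedBall, dist_zero_right, EuclideanSpace.norm_eq]
    apply Real.sqrt_le_sqrt
    have hbd : ∀ i : Fin N, ‖y i‖ ^ 2 ≤ (L/2)^2 + (if k ≤ (i:ℕ) then (y i)^2 else 0) := by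
      intro i
      by_cases h : k ≤ (i:ℕ)
      · simp only [if_pos h, Real.norm_eq_abs, sq_abs]
        nlinarith [sq_nonneg (L/2)]
      · have hik : (i:ℕ) < k := not_le.mp h
        have h2 := hy.1 i hik
        simp only [if_neg h, add_zero, Real.norm_eq_abs]
        nlinarith [abs_nonneg (y i)]
    calc ∑ i, ‖y i‖^2 ≤ ∑ i : Fin N, ((L/2)^2 + (if k ≤ (i:ℕ) then (y i)^2 else 0)) :=
          Finset.sum_le_sum fun i _ => hbd i
      _ = (N:ℝ)*(L/2)^2 + qf k y := by
          rw [Finset.sum_add_distrib, Finset.sum_const, Finset.card_univ, Fintype.card_fin,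
            nsmul_eq_mul]
          rfl
      _ ≤ (N:ℝ)*(L/2)^2 + R^2 := by
          have h2 : qf k y ≤ R ^ 2 := hy.2
          linarith
  have hKcomp : IsCompact K := Metric.isCompact_of_isClosed_isBounded hKclosed hKbdd
  have htail0 : 0 ≤ tailNorm k ystar := by
    rw [tailNorm_eq_qf]; exact Real.sqrt_nonneg _
  have hystarK : ystar ∈ K := by
    refine ⟨hystar, ?_⟩
    have h1 : qf k ystar = (tailNorm k ystar)^2 := by
      rw [tailNorm_eq_qf, Real.sq_sqrt (qf_nonneg _)]
    show qf k ystar ≤ R ^ 2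
    rw [h1]
    exact pow_le_pow_left₀ htail0 hRy 2
  obtain ⟨z₀, hz₀K, hz₀max⟩ := hKcomp.exists_isMaxOn ⟨ystar, hystarK⟩ hφc.continuousOn
  rw [isMaxOn_iff] at hz₀max
  set Z : Set (Euc N) := K ∩ {y | φ z₀ ≤ φ y} with hZdef
  have hZcomp : IsCompact Z := hKcomp.inter_right (isClosed_le continuous_const hφc)
  set ψ : Euc N → ℝ := fun y => ∑ i : Fin N, if (i:ℕ) < k then y i else 0 with hψdef
  have hψc : Continuous ψ := by
    apply continuous_finset_sum
    intro i _
    by_cases h : (i:ℕ) < k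
    · simp only [if_pos h]; exact hcoord i
    · simp only [if_neg h]; exact continuous_const
  obtain ⟨z₁, hz₁Z, hz₁min⟩ := hZcomp.exists_isMinOn ⟨z₀, hz₀K, show φ z₀ ≤ φ z₀ from le_rfl⟩ hψc.continuousOn
  rw [isMinOn_iff] at hz₁min
  have hz₁K : z₁ ∈ K := hz₁Z.1
  have hz₁strip : z₁ ∈ strip N k L := hz₁K.1
  have hz₁max : ∀ y ∈ K, φ y ≤ φ z₁ := fun y hy => le_trans (hz₀max y hy) hz₁Z.2
  have hφz₁ : m ≤ φ z₁ := by
    have h2 : m ≤ φ ystar := by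
      have := qf_nonneg (k := k) ystar
      simp only [hφdef]
      nlinarith
    exact le_trans h2 (hz₁max ystar hystarK)
  have hqz₁ : qf k z₁ < R ^ 2 := by
    by_contra hq
    push_neg at hq
    have htail : R₀ ≤ tailNorm k z₁ := by
      rw [tailNorm_eq_qf]
      refine le_trans hRR₀ ?_
      rw [Real.le_sqrt hRpos.le (qf_nonneg _)]
      exact hq
    have hsmall := hR₀ z₁ hz₁strip htail
    have hb : u z₁ < m/2 := lt_of_le_of_lt (le_abs_self _) hsmall
    have hqle : qf k z₁ ≤ R ^ 2 := hz₁K.2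
    have h3 : φ z₁ ≤ u z₁ + ε * R^2 := by
      simp only [hφdef]
      nlinarith
    rw [hεR] at h3
    have hlt : u z₁ + m/4 < m := by linarith
    exact absurd (lt_of_le_of_lt (le_trans hφz₁ h3) hlt) (lt_irrefl m)
  have hlow : ∀ i : Fin N, (i:ℕ) < k → -(L/2) ≤ z₁ i :=
    fun i hik => (abs_le.mp (hz₁strip i hik)).1
  have hface : ∀ i : Fin N, (i:ℕ) < k → z₁ i < L / 2 := by
    intro i hik
    rcases lt_or_eq_of_le ((abs_le.mp (hz₁strip i hik)).2) with h | h
    · exact h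
    · exfalso
      set w := z₁ + (-L) • e N i with hwdef
      have hwi : w i = -(L/2) := by
        rw [hwdef, euc_line_apply_self, h]; ring
      have hwstrip : w ∈ strip N k L := by
        intro j hj
        by_cases hji : j = i
        · subst hji
          rw [hwdef, euc_line_apply_self, h,
            show L/2 + -L = -(L/2) from by ring, abs_neg, abs_of_nonneg (by linarith)]
        · rw [hwdef, euc_line_apply_ne _ _ hji]
          exact hz₁strip j hj
      have hqw : qf k w = qf k z₁ := by
        rw [hwdef, qf_line]
        have : ¬ k ≤ (i:ℕ) := not_le.mpr hik
        simp [this]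
      have hw_u : u w = u z₁ := by
        have h2 := hper i hik w hwi
        have h3 : w + L • e N i = z₁ := by
          rw [hwdef, add_assoc, ← add_smul]
          simp
        rw [h3] at h2
        exact h2.symm
      have hwK : w ∈ K := ⟨hwstrip, by show qf k w ≤ R^2; rw [hqw]; exact hz₁K.2⟩
      have hwZ : w ∈ Z := by
        refine ⟨hwK, ?_⟩
        show φ z₀ ≤ φ w
        have hφw : φ w = φ z₁ := by simp only [hφdef]; rw [hw_u, hqw]
        rw [hφw]
        exact hz₁Z.2
      have hψw : ψ w = ψ z₁ + (-L) := by
        simp only [hψdef]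
        have hterm : ∀ j : Fin N, (if (j:ℕ) < k then w j else 0)
            = (if (j:ℕ) < k then z₁ j else 0) + (if j = i then -L else 0) := by
          intro j
          rcases eq_or_ne j i with rfl | hne
          · rw [hwdef, euc_line_apply_self]; simp [hik]
          · rw [hwdef, euc_line_apply_ne _ _ hne]; simp [hne]
        rw [Finset.sum_congr rfl fun j _ => hterm j, Finset.sum_add_distrib]
        simp
      have := hz₁min w hwZ
      rw [hψw] at this
      linarith
  have hud : Differentiable ℝ u := hu.differentiable (by norm_num)
  have hdir : ∀ i : Fin N,
      iteratedDeriv 2 (fun t : ℝ => u (z₁ + t • e N i)) 0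
        + ε * (if k ≤ (i:ℕ) then 2 else 0) ≤ 0 := by
    intro i
    set A : ℝ → ℝ := fun t => u (z₁ + t • e N i) with hAdef
    have hA : ContDiff ℝ 2 A := contDiff_line hu z₁ (e N i)
    by_cases hik : (i:ℕ) < k
    · -- tangential direction
      have hki : ¬ k ≤ (i:ℕ) := not_le.mpr hik
      set g : ℝ → ℝ := fun t => A t + ε * qf k z₁ with hgdef
      have hgφ : ∀ t : ℝ, g t = φ (z₁ + t • e N i) := by
        intro t
        simp only [hgdef, hφdef, hAdef]
        rw [qf_line]
        simp [hki]
      have hg0 : g 0 = φ z₁ := by rw [hgφ 0, zero_smul, add_zero]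
      have hmem : ∀ t : ℝ, -(L/2) ≤ z₁ i + t → z₁ i + t ≤ L/2 → (z₁ + t • e N i) ∈ K := by
        intro t h1 h2
        refine ⟨?_, ?_⟩
        · intro j hj
          by_cases hji : j = i
          · subst hji; rw [euc_line_apply_self]; exact abs_le.mpr ⟨h1, h2⟩
          · rw [euc_line_apply_ne _ _ hji]; exact hz₁strip j hj
        · show qf k (z₁ + t • e N i) ≤ R^2
          rw [qf_line]
          simp only [if_neg hki, add_zero]
          exact hz₁K.2
      have hδ : 0 < L/2 - z₁ i := by linarith [hface i hik]
      have hgmax : ∀ t ∈ Set.Icc (0:ℝ) (L/2 - z₁ i), g t ≤ g 0 := by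
        intro t ht
        rw [hgφ t, hg0]
        exact hz₁max _ (hmem t (by linarith [hlow i hik, ht.1]) (by linarith [ht.2]))
      have hgd : HasDerivAt g (fderiv ℝ u z₁ (e N i)) 0 :=
        (hasDerivAt_line_zero hud z₁ (e N i)).add_const _
      have hder0 : deriv g 0 = 0 := by
        have hle : deriv g 0 ≤ 0 := right_deriv_nonpos hδ hgmax hgd.differentiableAt
        rcases lt_or_eq_of_le (hlow i hik) with hgt | heq
        · have hub : z₁ i ≤ L/2 := (abs_le.mp (hz₁strip i hik)).2
          have hδ' : 0 < z₁ i + L/2 := by linarith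
          have hgmax' : ∀ t ∈ Set.Icc (-(z₁ i + L/2)) (0:ℝ), g t ≤ g 0 := by
            intro t ht
            rw [hgφ t, hg0]
            exact hz₁max _ (hmem t (by linarith [ht.1]) (by linarith [ht.2]))
          have hge := left_deriv_nonneg hδ' hgmax' hgd.differentiableAt
          linarith
        · -- z₁ i = -(L/2)
          set v := z₁ + L • e N i with hvdef
          have hqv : qf k v = qf k z₁ := by rw [hvdef, qf_line]; simp [hki]
          have huv : u v = u z₁ := hper i hik z₁ heq.symm
          have hφv : φ v = φ z₁ := by simp only [hφdef]; rw [huv, hqv]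
          set h : ℝ → ℝ := fun t => u (v + t • e N i) + ε * qf k z₁ with hhdef
          have hhφ : ∀ t : ℝ, h t = φ (v + t • e N i) := by
            intro t
            simp only [hhdef, hφdef]
            rw [qf_line, hqv]
            simp [hki]
          have hvmem : ∀ t : ℝ, -L ≤ t → t ≤ 0 → (v + t • e N i) ∈ K := by
            intro t h1 h2
            refine ⟨?_, ?_⟩
            · intro j hj
              by_cases hji : j = i
              · subst hji
                rw [euc_line_apply_self, hvdef, euc_line_apply_self, ← heq]
                rw [abs_le]
                constructor <;> linarith
              · rw [euc_line_apply_ne _ _ hji, hvdef, euc_line_apply_ne _ _ hji]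
                exact hz₁strip j hj
            · show qf k (v + t • e N i) ≤ R ^ 2
              rw [qf_line, hqv]
              simp only [if_neg hki, add_zero]
              exact hz₁K.2
          have hh0 : h 0 = φ z₁ := by rw [hhφ 0, zero_smul, add_zero, hφv]
          have hhmax : ∀ t ∈ Set.Icc (-L) (0:ℝ), h t ≤ h 0 := by
            intro t ht
            rw [hhφ t, hh0]
            exact hz₁max _ (hvmem t ht.1 ht.2)
          have hhd : HasDerivAt h (fderiv ℝ u v (e N i)) 0 :=
            (hasDerivAt_line_zero hud v (e N i)).add_const _
          have hge := left_deriv_nonneg hL hhmax hhd.differentiableAt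
          rw [hhd.deriv] at hge
          have hpd : pd i u v = pd i u z₁ := hperd i hik z₁ heq.symm
          have hge2 : 0 ≤ pd i u z₁ := hpd ▸ (show (0:ℝ) ≤ pd i u v from hge)
          have hge3 : 0 ≤ deriv g 0 := by
            rw [hgd.deriv]
            exact hge2
          linarith
      have hgC : ContDiff ℝ 2 g := hA.add contDiff_const
      have htest := second_deriv_test_right hδ hgC hgmax hder0
      have hdecomp : iteratedDeriv 2 g 0 = iteratedDeriv 2 A 0 := iter2_add_const hA _
      simp only [if_neg hki, mul_zero, add_zero]
      rw [← hdecomp]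
      exact htest
    · -- normal direction
      have hki : k ≤ (i:ℕ) := not_lt.mp hik
      set c := z₁ i with hcdef
      set g : ℝ → ℝ := fun t => A t + (ε * qf k z₁ + ((ε * (2 * c)) * t + ε * t ^ 2))
        with hgdef
      have hgφ : ∀ t : ℝ, g t = φ (z₁ + t • e N i) := by
        intro t
        simp only [hgdef, hφdef, hAdef]
        rw [qf_line]
        simp only [if_pos hki]
        ring
      have hg0 : g 0 = φ z₁ := by
        rw [hgφ 0, zero_smul, add_zero]
      have hD : 0 < R^2 - qf k z₁ := by linarith [hqz₁]
      set δ := min 1 ((R^2 - qf k z₁) / (2 * |c| + 1)) with hδdef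
      have hδpos : 0 < δ := lt_min one_pos (by positivity)
      have hmem : ∀ t : ℝ, |t| ≤ δ → (z₁ + t • e N i) ∈ K := by
        intro t ht
        refine ⟨?_, ?_⟩
        · intro j hj
          have hji : j ≠ i := by
            intro hh
            rw [hh] at hj
            omega
          rw [euc_line_apply_ne _ _ hji]
          exact hz₁strip j hj
        · show qf k (z₁ + t • e N i) ≤ R^2
          rw [qf_line]
          simp only [if_pos hki]
          have h1 : |t| ≤ 1 := le_trans ht (min_le_left _ _)
          have h2 : |t| ≤ (R^2 - qf k z₁) / (2*|c|+1) := le_trans ht (min_le_right _ _)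
          have hb := tail_poly_bound hD h1 h2
          linarith
      have hgmax : ∀ t ∈ Set.Icc (0:ℝ) δ, g t ≤ g 0 := by
        intro t ht
        rw [hgφ t, hg0]
        exact hz₁max _ (hmem t (by rw [abs_of_nonneg ht.1]; exact ht.2))
      have hgmax' : ∀ t ∈ Set.Icc (-δ) (0:ℝ), g t ≤ g 0 := by
        intro t ht
        rw [hgφ t, hg0]
        exact hz₁max _ (hmem t (by rw [abs_of_nonpos ht.2]; linarith [ht.1]))
      have hsq : HasDerivAt (fun s : ℝ => s ^ 2) (0:ℝ) 0 := by
        simpa using hasDerivAt_pow 2 (0:ℝ)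
      have hpoly : HasDerivAt (fun t : ℝ => ε * qf k z₁ + ((ε * (2*c)) * t + ε * t^2))
          (ε*(2*c)) 0 := by
        simpa using (((hasDerivAt_id (0:ℝ)).const_mul (ε*(2*c))).add
          (hsq.const_mul ε)).const_add (ε * qf k z₁)
      have hgd : HasDerivAt g (fderiv ℝ u z₁ (e N i) + ε*(2*c)) 0 :=
        (hasDerivAt_line_zero hud z₁ (e N i)).add hpoly
      have hder0 : deriv g 0 = 0 := by
        have hle := right_deriv_nonpos hδpos hgmax hgd.differentiableAt
        have hge := left_deriv_nonneg hδpos hgmax' hgd.differentiableAt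
        linarith
      have hgC : ContDiff ℝ 2 g := by
        apply hA.add
        apply contDiff_const.add
        exact (contDiff_const.mul contDiff_id).add (contDiff_const.mul (contDiff_id.pow 2))
      have htest := second_deriv_test_right hδpos hgC hgmax hder0
      have hdecomp : iteratedDeriv 2 g 0 = iteratedDeriv 2 A 0 + 2 * ε :=
        iter2_decomp hA (ε * qf k z₁) (ε*(2*c)) ε
      simp only [if_pos hki]
      linarith [htest, hdecomp.symm.le, hdecomp.le]
  have hsum := Finset.sum_nonpos (fun i (_ : i ∈ Finset.univ) => hdir i)
  rw [Finset.sum_add_distrib] at hsum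
  have hlapz : (∑ i : Fin N, iteratedDeriv 2 (fun t : ℝ => u (z₁ + t • e N i)) 0) = 0 :=
    hlap z₁ hz₁strip
  have hpos : ε * 2 ≤ ∑ i : Fin N, ε * (if k ≤ (i:ℕ) then 2 else 0) := by
    have hterm := Finset.single_le_sum
      (f := fun i : Fin N => ε * (if k ≤ (i:ℕ) then (2:ℝ) else 0))
      (fun i _ => by
        by_cases h : k ≤ (i:ℕ) <;> simp [h]
        positivity)
      (Finset.mem_univ (⟨k, hk2⟩ : Fin N))
    simpa using hterm
  rw [hlapz] at hsum
  linarith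

end LiouvilleCore


section LiouvilleFold

variable {N k : ℕ}

lemma per_int {u : Euc N → ℝ} {L : ℝ}
    (hper : ∀ i : Fin N, (i:ℕ) < k → ∀ y : Euc N, u (y + L • e N i) = u y)
    (i : Fin N) (hik : (i:ℕ) < k) (mm : ℤ) (y : Euc N) :
    u (y + ((mm : ℝ) * L) • e N i) = u y := by
  induction mm using Int.induction_on with
  | zero => simp
  | succ n ih =>
    have hcast : (((n:ℤ) + 1 : ℤ) : ℝ) * L = ((n : ℤ) : ℝ) * L + L := by push_cast; ring
    rw [hcast, add_smul, ← add_assoc, hper i hik, ih]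
  | pred n ih =>
    have h2 := hper i hik (y + (((-(n:ℤ) - 1 : ℤ) : ℝ) * L) • e N i)
    have h3 : (y + (((-(n:ℤ) - 1 : ℤ) : ℝ) * L) • e N i) + L • e N i
        = y + (((-(n:ℤ) : ℤ) : ℝ) * L) • e N i := by
      rw [add_assoc, ← add_smul]
      congr 2
      push_cast
      ring
    rw [h3] at h2
    rw [← h2]
    exact ih

lemma fold_exists {u : Euc N → ℝ} {L : ℝ} (hL : 0 < L)
    (hper : ∀ i : Fin N, (i:ℕ) < k → ∀ y : Euc N, u (y + L • e N i) = u y)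
    (y : Euc N) : ∃ z ∈ strip N k L, u z = u y := by
  classical
  set c : Fin N → ℝ := fun i =>
    if (i:ℕ) < k then ((round (y i / L) : ℤ) : ℝ) * L else 0 with hcdef
  have key : ∀ T : Finset (Fin N), u (y + ∑ i ∈ T, (-(c i)) • e N i) = u y := by
    intro T
    induction T using Finset.induction_on with
    | empty => simp
    | @insert a s ha ih =>
      rw [Finset.sum_insert ha]
      have hre : y + ((-(c a)) • e N a + ∑ i ∈ s, (-(c i)) • e N i)
           = (y + ∑ i ∈ s, (-(c i)) • e N i) + (-(c a)) • e N a := by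
        abel
      rw [hre]
      by_cases hak : (a:ℕ) < k
      · have hc : -(c a) = ((-(round (y a / L)) : ℤ) : ℝ) * L := by
          simp only [hcdef, if_pos hak]
          push_cast
          ring
        rw [hc, per_int hper a hak]
        exact ih
      · have hc : -(c a) = 0 := by simp [hcdef, hak]
        rw [hc, zero_smul, add_zero]
        exact ih
  refine ⟨y + ∑ i, (-(c i)) • e N i, ?_, key Finset.univ⟩
  intro j hj
  have happ : (y + ∑ i, (-(c i)) • e N i) j = y j - c j := by
    have h1 : (∑ i, (-(c i)) • e N i) j = ∑ i : Fin N, (-(c i)) * (if j = i then 1 else 0) := by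
      rw [WithLp.ofLp_sum, Finset.sum_apply j Finset.univ _]
      refine Finset.sum_congr rfl fun i _ => ?_
      simp [e, PiLp.smul_apply, EuclideanSpace.single_apply, smul_eq_mul]
      split_ifs <;> simp
    rw [PiLp.add_apply, h1]
    simp only [mul_ite, mul_one, mul_zero, Finset.sum_ite_eq, Finset.mem_univ, if_true]
    ring
  rw [happ]
  simp only [hcdef, if_pos hj]
  have h1 : y j - ((round (y j / L) : ℤ) : ℝ) * L
      = (y j / L - ((round (y j / L) : ℤ) : ℝ)) * L := by
    rw [sub_mul, div_mul_cancel₀ _ (ne_of_gt hL)]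
  rw [h1, abs_mul, abs_of_pos hL]
  have h2 := abs_sub_round (y j / L)
  calc |y j / L - ((round (y j / L) : ℤ) : ℝ)| * L ≤ (1/2) * L := by
        apply mul_le_mul_of_nonneg_right _ hL.le
        exact_mod_cast h2
    _ = L / 2 := by ring

lemma pd_of_translate {u : Euc N → ℝ} (hu : Differentiable ℝ u) (cc : Euc N)
    (hp : ∀ w, u (w + cc) = u w) (y : Euc N) (i : Fin N) : pd i u (y + cc) = pd i u y := by
  have h1 : HasFDerivAt (fun w : Euc N => u (w + cc)) (fderiv ℝ u (y + cc)) y := by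
    have h0 : HasFDerivAt (fun w : Euc N => w + cc) (ContinuousLinearMap.id ℝ (Euc N)) y :=
      (hasFDerivAt_id y).add_const cc
    have := (hu (y + cc)).hasFDerivAt.comp y h0
    exact this
  have h2 : HasFDerivAt u (fderiv ℝ u (y + cc)) y := by
    have heq : (fun w : Euc N => u (w + cc)) = u := funext hp
    rwa [heq] at h1
  unfold pd
  rw [h2.fderiv]

end LiouvilleFold

/-- Liouville theorem for bounded periodic harmonic functions, and
uniqueness of bounded solutions of the Poisson problem with periodic boundary conditions. -/
theorem liouville_periodic_and_uniqueness
    (N k : ℕ) (hN : 3 ≤ N) (hk1 : 1 ≤ k) (hk2 : k < N) (L : ℝ) (hL : 0 < L) :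
    (∀ u : Euc N → ℝ, ContDiff ℝ 2 u → (∀ y : Euc N, lap u y = 0) →
      (∃ M : ℝ, ∀ y : Euc N, |u y| ≤ M) →
      (∀ i : Fin N, (i : ℕ) < k → ∀ y : Euc N, u (y + L • e N i) = u y) →
      (∀ ε : ℝ, 0 < ε → ∃ R : ℝ, ∀ y : Euc N, R ≤ tailNorm k y → |u y| < ε) →
      ∀ y : Euc N, u y = 0) ∧
    (∀ f u₁ u₂ : Euc N → ℝ, ContDiff ℝ 2 u₁ → ContDiff ℝ 2 u₂ →
      (∃ M : ℝ, ∀ y : Euc N, |u₁ y| ≤ M) → (∃ M : ℝ, ∀ y : Euc N, |u₂ y| ≤ M) →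
      (∀ y ∈ strip N k L, -lap u₁ y = f y) → (∀ y ∈ strip N k L, -lap u₂ y = f y) →
      PeriodicBC N k L u₁ → PeriodicBC N k L u₂ →
      ∀ y ∈ strip N k L, u₁ y = u₂ y) := by
  constructor
  · intro u hu hlapall _ hper hdecay y
    have hud : Differentiable ℝ u := hu.differentiable (by norm_num)
    have hper' : ∀ i : Fin N, (i:ℕ) < k → ∀ y : Euc N, y i = -(L/2) →
        u (y + L • e N i) = u y :=
      fun i hik y _ => hper i hik y
    have hperd : ∀ i : Fin N, (i:ℕ) < k → ∀ y : Euc N, y i = -(L/2) →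
        pd i u (y + L • e N i) = pd i u y :=
      fun i hik y _ => pd_of_translate hud (L • e N i) (fun w => hper i hik w) y i
    have hdecay' : ∀ ε : ℝ, 0 < ε → ∃ R, ∀ y ∈ strip N k L, R ≤ tailNorm k y → |u y| < ε :=
      fun ε hε => (hdecay ε hε).imp fun R hR => fun y _ hy => hR y hy
    have h1 : ∀ y ∈ strip N k L, u y ≤ 0 :=
      core_nonpos N k hk2 L hL u hu (fun y _ => hlapall y) hper' hperd hdecay'
    have hun : ContDiff ℝ 2 (fun w => -(u w)) := hu.neg
    have h2 : ∀ y ∈ strip N k L, -(u y) ≤ 0 := by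
      apply core_nonpos N k hk2 L hL _ hun
      · intro z _
        rw [lap_neg, hlapall z, neg_zero]
      · intro i hik z _
        show -(u (z + L • e N i)) = -(u z)
        rw [hper i hik z]
      · intro i hik z hz
        rw [pd_neg, pd_neg, hperd i hik z hz]
      · intro ε hε
        obtain ⟨R, hR⟩ := hdecay ε hε
        exact ⟨R, fun z _ hz => by simpa [abs_neg] using hR z hz⟩
    obtain ⟨z, hz, hzu⟩ := fold_exists hL hper y
    rw [← hzu]
    exact le_antisymm (h1 z hz) (by linarith [h2 z hz])
  · intro f u₁ u₂ hu₁ hu₂ _ _ hpde₁ hpde₂ hbc₁ hbc₂ y hy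
    have key : ∀ (v w : Euc N → ℝ), ContDiff ℝ 2 v → ContDiff ℝ 2 w →
        (∀ z ∈ strip N k L, -lap v z = f z) → (∀ z ∈ strip N k L, -lap w z = f z) →
        PeriodicBC N k L v → PeriodicBC N k L w → ∀ z ∈ strip N k L, v z - w z ≤ 0 := by
      intro v w hv hw hp1 hp2 hb1 hb2
      apply core_nonpos N k hk2 L hL (fun z => v z - w z) (hv.sub hw)
      · intro z hz
        rw [lap_sub hv hw]
        have e1 := hp1 z hz
        have e2 := hp2 z hz
        linarith
      · intro i hik z hzi
        show v (z + L • e N i) - w (z + L • e N i) = v z - w z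
        rw [hb1.per i hik z hzi, hb2.per i hik z hzi]
      · intro i hik z hzi
        rw [pd_sub hv hw, pd_sub hv hw, hb1.per_deriv i hik z hzi, hb2.per_deriv i hik z hzi]
      · intro ε hε
        obtain ⟨R₁, hR₁⟩ := hb1.decay (ε/2) (by linarith)
        obtain ⟨R₂, hR₂⟩ := hb2.decay (ε/2) (by linarith)
        refine ⟨max R₁ R₂, fun z hz hzt => ?_⟩
        have e1 := hR₁ z hz (le_trans (le_max_left _ _) hzt)
        have e2 := hR₂ z hz (le_trans (le_max_right _ _) hzt)
        calc |v z - w z| ≤ |v z| + |w z| := by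
              rw [sub_eq_add_neg]
              exact (abs_add_le _ _).trans (by rw [abs_neg])
          _ < ε := by linarith
    have h1 := key u₁ u₂ hu₁ hu₂ hpde₁ hpde₂ hbc₁ hbc₂ y hy
    have h2 := key u₂ u₁ hu₂ hu₁ hpde₂ hpde₁ hbc₂ hbc₁ y hy
    linarith

end PeriodicCriticalSystem
end
end

section
/- Let N ≥ 2, let 1 ≤ k < N be an integer and let τ > k be a real number. Then there exists a constant C > 0, depending only on N, k and τ, such that for every L ≥ 1, every x ∈ B_1(0) ⊂ ℝ^N, and every y = (y',y'') ∈ ℝ^N (y' ∈ ℝ^k, y'' ∈ ℝ^{N-k}), one has Σ_{j=0}^∞ (1+|y-x_j|)^{-τ} ≤ C(1+|y''|)^{k-τ}. -/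
open Real MeasureTheory Filter Topology
open scoped Classical

noncomputable section

namespace PeriodicCriticalSystem

/-- Core 1-D tail sum estimate: `∑_{q∈s} (B+q)^{-σ} ≤ C B^{1-σ}`. -/
private lemma sum_nat_shift_bound {σ : ℝ} (hσ : 1 < σ) :
    ∃ C : ℝ, 0 < C ∧ ∀ B : ℝ, 1 ≤ B → ∀ s : Finset ℕ,
      (∑ q ∈ s, (B + (q : ℝ)) ^ (-σ)) ≤ C * B ^ (1 - σ) := by
  have hsum : Summable (fun n : ℕ => ((n : ℝ) + 1) ^ (-σ)) := by
    have h0 : Summable (fun n : ℕ => ((n : ℝ)) ^ (-σ)) :=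
      Real.summable_nat_rpow.2 (by linarith)
    have := (summable_nat_add_iff 1).2 h0
    simpa using this
  set Cσ : ℝ := ∑' n : ℕ, ((n : ℝ) + 1) ^ (-σ) with hCσ
  have hCσ1 : (1 : ℝ) ≤ Cσ := by
    have h := Summable.le_tsum hsum 0 (fun n _ => by positivity)
    simpa using h
  refine ⟨2 * Cσ, by linarith, ?_⟩
  intro B hB s
  have hB0 : (0 : ℝ) < B := by linarith
  set K : ℕ := ⌈B⌉₊ with hKdef
  have hK1 : 1 ≤ K := Nat.one_le_ceil_iff.2 hB0
  have hBK : B ≤ (K : ℝ) := Nat.le_ceil B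
  have hKB : (K : ℝ) ≤ 2 * B := by
    have := Nat.ceil_lt_add_one (le_of_lt hB0)
    have : (K : ℝ) < B + 1 := this
    linarith
  have key : ∀ M : ℕ, (∑ q ∈ Finset.range (K * M), (B + (q : ℝ)) ^ (-σ)) ≤
      2 * B ^ (1 - σ) * ∑ n ∈ Finset.range M, ((n : ℝ) + 1) ^ (-σ) := by
    intro M
    induction M with
    | zero => simp
    | succ M ih =>
      have hsplit : K * (M + 1) = K * M + K := by ring
      rw [hsplit, Finset.sum_range_add, Finset.sum_range_succ]
      have hchunk : (∑ i ∈ Finset.range K, (B + ((K * M + i : ℕ) : ℝ)) ^ (-σ)) ≤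
          2 * B ^ (1 - σ) * ((M : ℝ) + 1) ^ (-σ) := by
        have hterm : ∀ i ∈ Finset.range K,
            (B + ((K * M + i : ℕ) : ℝ)) ^ (-σ) ≤ (B * ((M : ℝ) + 1)) ^ (-σ) := by
          intro i _
          apply Real.rpow_le_rpow_of_nonpos (by positivity)
          · push_cast
            have h1 : B * (M : ℝ) ≤ (K : ℝ) * M := by
              apply mul_le_mul_of_nonneg_right hBK (by positivity)
            have h2 : (0 : ℝ) ≤ (i : ℝ) := by positivity
            nlinarith
          · linarith
        calc (∑ i ∈ Finset.range K, (B + ((K * M + i : ℕ) : ℝ)) ^ (-σ))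
            ≤ ∑ _i ∈ Finset.range K, (B * ((M : ℝ) + 1)) ^ (-σ) :=
              Finset.sum_le_sum hterm
          _ = (K : ℝ) * (B * ((M : ℝ) + 1)) ^ (-σ) := by
              rw [Finset.sum_const, Finset.card_range, nsmul_eq_mul]
          _ ≤ (2 * B) * (B * ((M : ℝ) + 1)) ^ (-σ) := by
              apply mul_le_mul_of_nonneg_right hKB (by positivity)
          _ = 2 * B ^ (1 - σ) * ((M : ℝ) + 1) ^ (-σ) := by
              rw [Real.mul_rpow (le_of_lt hB0) (by positivity)]
              rw [show (1 : ℝ) - σ = 1 + (-σ) by ring, Real.rpow_add hB0,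
                Real.rpow_one]
              ring
      linarith [ih]
  set M : ℕ := s.sup id + 1 with hM
  have hsub : s ⊆ Finset.range (K * M) := by
    intro q hq
    rw [Finset.mem_range]
    have h1 : q ≤ s.sup id := Finset.le_sup (f := id) hq
    have h2 : q < M := by omega
    calc q < M := h2
      _ ≤ K * M := Nat.le_mul_of_pos_left M hK1
  calc (∑ q ∈ s, (B + (q : ℝ)) ^ (-σ))
      ≤ ∑ q ∈ Finset.range (K * M), (B + (q : ℝ)) ^ (-σ) :=
        Finset.sum_le_sum_of_subset_of_nonneg hsub (fun q _ _ => by positivity)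
    _ ≤ 2 * B ^ (1 - σ) * ∑ n ∈ Finset.range M, ((n : ℝ) + 1) ^ (-σ) := key M
    _ ≤ 2 * B ^ (1 - σ) * Cσ := by
        apply mul_le_mul_of_nonneg_left _ (by positivity)
        exact Summable.sum_le_tsum _ (fun n _ => by positivity) hsum
    _ = 2 * Cσ * B ^ (1 - σ) := by ring

/-- 1-D lattice sum estimate. -/
private lemma dim1_bound {σ : ℝ} (hσ : 1 < σ) :
    ∃ C : ℝ, 0 < C ∧ ∀ B L w : ℝ, 1 ≤ B → 1 ≤ L → ∀ S : Finset ℤ,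
      (∑ m ∈ S, (B + |w + L * (m : ℝ)|) ^ (-σ)) ≤ C * B ^ (1 - σ) := by
  obtain ⟨C₁, hC₁, h1⟩ := sum_nat_shift_bound hσ
  refine ⟨2 ^ σ * (2 * C₁), by positivity, ?_⟩
  intro B L w hB hL S
  have hB0 : (0 : ℝ) < B := by linarith
  have hL0 : (0 : ℝ) < L := by linarith
  set m₀ : ℤ := round (-w / L) with hm₀
  have key : ∀ m : ℤ, (B + |w + L * (m : ℝ)|) ^ (-σ) ≤
      2 ^ σ * (B + (((m - m₀).natAbs : ℕ) : ℝ)) ^ (-σ) := by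
    intro m
    set q : ℝ := (((m - m₀).natAbs : ℕ) : ℝ) with hq
    have hqabs : q = |(m : ℝ) - (m₀ : ℝ)| := by
      rw [hq]
      push_cast [Nat.cast_natAbs]
      push_cast
      ring_nf
    have hq0 : 0 ≤ q := by positivity
    have hhalf : (B + q) / 2 ≤ B + |w + L * (m : ℝ)| := by
      rcases eq_or_ne m m₀ with h | h
      · have : q = 0 := by rw [hqabs, h, sub_self, abs_zero]
        rw [this]
        have := abs_nonneg (w + L * (m : ℝ))
        linarith
      · have hq1 : (1 : ℝ) ≤ q := by
          have hne : m - m₀ ≠ 0 := sub_ne_zero.mpr h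
          have hna : 1 ≤ (m - m₀).natAbs := Int.natAbs_pos.mpr hne
          rw [hq]
          exact_mod_cast hna
        have hround : |(-w / L) - (m₀ : ℝ)| ≤ 1 / 2 := abs_sub_round (-w / L)
        have hfact : w + L * (m : ℝ) = L * ((m : ℝ) - (-w / L)) := by
          field_simp
          ring
        have habs : |w + L * (m : ℝ)| = L * |(m : ℝ) - (-w / L)| := by
          rw [hfact, abs_mul, abs_of_pos hL0]
        have htri : |(m : ℝ) - (m₀ : ℝ)| ≤ |(m : ℝ) - (-w / L)| + |(-w / L) - (m₀ : ℝ)| := by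
          have := abs_sub_le ((m : ℝ)) (-w / L) ((m₀ : ℝ))
          simpa using this
        have h2 : q - 1 / 2 ≤ |(m : ℝ) - (-w / L)| := by
          rw [hqabs]; linarith
        have h3 : q - 1 / 2 ≤ L * |(m : ℝ) - (-w / L)| := by
          have hnn : (0 : ℝ) ≤ |(m : ℝ) - (-w / L)| := abs_nonneg _
          nlinarith
        rw [habs] at *
        linarith [habs ▸ h3]
    have hpos : (0 : ℝ) < (B + q) / 2 := by positivity
    calc (B + |w + L * (m : ℝ)|) ^ (-σ) ≤ ((B + q) / 2) ^ (-σ) :=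
          Real.rpow_le_rpow_of_nonpos hpos hhalf (by linarith)
      _ = 2 ^ σ * (B + q) ^ (-σ) := by
          rw [Real.div_rpow (by linarith) (by norm_num),
            Real.rpow_neg (by norm_num : (0:ℝ) ≤ 2), div_eq_mul_inv, inv_inv]
          ring
  classical
  calc (∑ m ∈ S, (B + |w + L * (m : ℝ)|) ^ (-σ))
      ≤ ∑ m ∈ S, 2 ^ σ * (B + (((m - m₀).natAbs : ℕ) : ℝ)) ^ (-σ) :=
        Finset.sum_le_sum (fun m _ => key m)
    _ = 2 ^ σ * ∑ m ∈ S, (B + (((m - m₀).natAbs : ℕ) : ℝ)) ^ (-σ) := by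
        rw [Finset.mul_sum]
    _ ≤ 2 ^ σ * (2 * (C₁ * B ^ (1 - σ))) := by
        apply mul_le_mul_of_nonneg_left _ (by positivity)
        rw [Finset.sum_comp (fun n : ℕ => (B + (n : ℝ)) ^ (-σ))
          (fun m : ℤ => (m - m₀).natAbs)]
        have hcard : ∀ n ∈ S.image (fun m : ℤ => (m - m₀).natAbs),
            ({m ∈ S | (m - m₀).natAbs = n} : Finset ℤ).card ≤ 2 := by
          intro n _
          have hsubset : ({m ∈ S | (m - m₀).natAbs = n} : Finset ℤ) ⊆
              ({m₀ + n, m₀ - n} : Finset ℤ) := by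
            intro m hm
            rw [Finset.mem_filter] at hm
            rcases Int.natAbs_eq_iff.1 hm.2 with h | h
            · simp [Finset.mem_insert]
              left; omega
            · simp [Finset.mem_insert]
              right; omega
          calc ({m ∈ S | (m - m₀).natAbs = n} : Finset ℤ).card
              ≤ ({m₀ + n, m₀ - n} : Finset ℤ).card := Finset.card_le_card hsubset
            _ ≤ 2 := by
                apply le_trans (Finset.card_insert_le _ _)
                simp
        calc (∑ n ∈ S.image (fun m : ℤ => (m - m₀).natAbs),
                ({a ∈ S | (a - m₀).natAbs = n} : Finset ℤ).card • (B + (n : ℝ)) ^ (-σ))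
            ≤ ∑ n ∈ S.image (fun m : ℤ => (m - m₀).natAbs), 2 * (B + (n : ℝ)) ^ (-σ) := by
              apply Finset.sum_le_sum
              intro n hn
              rw [nsmul_eq_mul]
              apply mul_le_mul_of_nonneg_right _ (by positivity)
              exact_mod_cast hcard n hn
          _ = 2 * ∑ n ∈ S.image (fun m : ℤ => (m - m₀).natAbs), (B + (n : ℝ)) ^ (-σ) := by
              rw [Finset.mul_sum]
          _ ≤ 2 * (C₁ * B ^ (1 - σ)) := by
              apply mul_le_mul_of_nonneg_left _ (by norm_num)
              exact h1 B hB _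
    _ = 2 ^ σ * (2 * C₁) * B ^ (1 - σ) := by ring

/-- k-dimensional lattice sum estimate. -/
private lemma dimk_bound : ∀ (k : ℕ) (τ : ℝ), (k : ℝ) < τ →
    ∃ C : ℝ, 0 < C ∧ ∀ A L : ℝ, 1 ≤ A → 1 ≤ L → ∀ w : Fin k → ℝ,
      ∀ S : Finset (Fin k → ℤ),
      (∑ m ∈ S, (A + ∑ i, |w i + L * (m i : ℝ)|) ^ (-τ)) ≤ C * A ^ ((k : ℝ) - τ) := by
  intro k
  induction k with
  | zero =>
    intro τ hτ
    refine ⟨1, one_pos, ?_⟩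
    intro A L hA hL w S
    have hA0 : (0 : ℝ) < A := by linarith
    calc (∑ m ∈ S, (A + ∑ i, |w i + L * (m i : ℝ)|) ^ (-τ))
        ≤ ∑ m ∈ (Finset.univ : Finset (Fin 0 → ℤ)),
            (A + ∑ i, |w i + L * (m i : ℝ)|) ^ (-τ) :=
          Finset.sum_le_sum_of_subset_of_nonneg (Finset.subset_univ S)
            (fun m _ _ => by positivity)
      _ = A ^ (-τ) := by
          simp
      _ = 1 * A ^ (((0 : ℕ) : ℝ) - τ) := by
          norm_num
  | succ k ih =>
    intro τ hτ
    have hk1 : ((k : ℝ) + 1) < τ := by push_cast at hτ; linarith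
    have hτ1 : (1 : ℝ) < τ := by
      have : (0 : ℝ) ≤ (k : ℝ) := by positivity
      linarith
    obtain ⟨C₁, hC₁, h1⟩ := dim1_bound hτ1
    obtain ⟨C₂, hC₂, h2⟩ := ih (τ - 1) (by linarith)
    refine ⟨C₁ * C₂, by positivity, ?_⟩
    intro A L hA hL w S
    classical
    set e : (ℤ × (Fin k → ℤ)) ≃ (Fin (k + 1) → ℤ) :=
      Fin.consEquiv (fun _ => ℤ) with he
    set S' : Finset (ℤ × (Fin k → ℤ)) := S.map e.symm.toEmbedding with hS'
    set S1 : Finset ℤ := S'.image Prod.fst with hS1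
    set S2 : Finset (Fin k → ℤ) := S'.image Prod.snd with hS2
    have hexp : ∀ (b : ℤ) (a : Fin k → ℤ),
        (∑ i, |w i + L * ((e (b, a)) i : ℝ)|) =
          |w 0 + L * (b : ℝ)| + ∑ i, |w i.succ + L * (a i : ℝ)| := by
      intro b a
      simp [he, Fin.consEquiv, Fin.sum_univ_succ]
    have step1 : (∑ m ∈ S, (A + ∑ i, |w i + L * (m i : ℝ)|) ^ (-τ)) =
        ∑ p ∈ S', (A + ∑ i, |w i + L * ((e p) i : ℝ)|) ^ (-τ) := by
      rw [hS', Finset.sum_map]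
      apply Finset.sum_congr rfl
      intro m _
      simp
    have hsub : S' ⊆ S1 ×ˢ S2 := by
      intro p hp
      rw [Finset.mem_product]
      exact ⟨Finset.mem_image_of_mem _ hp, Finset.mem_image_of_mem _ hp⟩
    calc (∑ m ∈ S, (A + ∑ i, |w i + L * (m i : ℝ)|) ^ (-τ))
        = ∑ p ∈ S', (A + ∑ i, |w i + L * ((e p) i : ℝ)|) ^ (-τ) := step1
      _ ≤ ∑ p ∈ S1 ×ˢ S2, (A + ∑ i, |w i + L * ((e p) i : ℝ)|) ^ (-τ) :=
          Finset.sum_le_sum_of_subset_of_nonneg hsub (fun p _ _ => by positivity)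
      _ = ∑ a ∈ S2, ∑ b ∈ S1, (A + ∑ i, |w i + L * ((e (b, a)) i : ℝ)|) ^ (-τ) := by
          rw [Finset.sum_product_right]
      _ ≤ ∑ a ∈ S2, C₁ * (A + ∑ i, |w i.succ + L * (a i : ℝ)|) ^ (-(τ - 1)) := by
          apply Finset.sum_le_sum
          intro a _
          set B : ℝ := A + ∑ i, |w i.succ + L * (a i : ℝ)| with hBdef
          have hBA : A ≤ B := by
            rw [hBdef]
            have : (0 : ℝ) ≤ ∑ i, |w i.succ + L * (a i : ℝ)| := by positivity
            linarith
          have hB : 1 ≤ B := le_trans hA hBA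
          have := h1 B L (w 0) hB hL S1
          calc (∑ b ∈ S1, (A + ∑ i, |w i + L * ((e (b, a)) i : ℝ)|) ^ (-τ))
              = ∑ b ∈ S1, (B + |w 0 + L * (b : ℝ)|) ^ (-τ) := by
                apply Finset.sum_congr rfl
                intro b _
                rw [hexp b a, hBdef]
                congr 1
                ring
            _ ≤ C₁ * B ^ (1 - τ) := this
            _ = C₁ * (A + ∑ i, |w i.succ + L * (a i : ℝ)|) ^ (-(τ - 1)) := by
                rw [hBdef, show (1 : ℝ) - τ = -(τ - 1) by ring]
      _ = C₁ * ∑ a ∈ S2, (A + ∑ i, |w i.succ + L * (a i : ℝ)|) ^ (-(τ - 1)) := by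
          rw [Finset.mul_sum]
      _ ≤ C₁ * (C₂ * A ^ ((k : ℝ) - (τ - 1))) := by
          apply mul_le_mul_of_nonneg_left _ (le_of_lt hC₁)
          exact h2 A L hA hL (fun i => w i.succ) S2
      _ = C₁ * C₂ * A ^ (((k + 1 : ℕ) : ℝ) - τ) := by
          rw [show ((k : ℝ) - (τ - 1)) = (((k + 1 : ℕ) : ℝ) - τ) by push_cast; ring]
          ring

/-- Coordinates are bounded by the norm. -/
private lemma coord_le_norm {N : ℕ} (v : Euc N) (i : Fin N) : |v i| ≤ ‖v‖ := by
  rw [EuclideanSpace.norm_eq]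
  have h1 : ‖v i‖ ^ 2 ≤ ∑ j, ‖v j‖ ^ 2 :=
    Finset.single_le_sum (f := fun j => ‖v j‖ ^ 2) (fun j _ => by positivity)
      (Finset.mem_univ i)
  have h2 : |v i| = Real.sqrt (‖v i‖ ^ 2) := by
    rw [Real.sqrt_sq_eq_abs, Real.norm_eq_abs, abs_abs]
  rw [h2]
  exact Real.sqrt_le_sqrt h1

/-- The projection onto the tail coordinates. -/
private def tailProj (N k : ℕ) (v : Euc N) : Euc N := WithLp.toLp 2 (fun i => if k ≤ (i : ℕ) then v i else 0)

private lemma tailProj_apply {N : ℕ} (k : ℕ) (v : Euc N) (i : Fin N) :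
    tailProj N k v i = if k ≤ (i : ℕ) then v i else 0 := rfl

/-- The tail norm equals the norm of the tail projection. -/
private lemma tailNorm_eq_norm_proj {N : ℕ} (k : ℕ) (v : Euc N) :
    tailNorm k v = ‖tailProj N k v‖ := by
  rw [tailNorm, EuclideanSpace.norm_eq]
  congr 1
  apply Finset.sum_congr rfl
  intro i _
  rw [tailProj_apply]
  by_cases h : k ≤ (i : ℕ) <;> simp [h, Real.norm_eq_abs, sq_abs]

private lemma tailNorm_le_norm {N : ℕ} (k : ℕ) (v : Euc N) : tailNorm k v ≤ ‖v‖ := by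
  rw [tailNorm, EuclideanSpace.norm_eq]
  apply Real.sqrt_le_sqrt
  apply Finset.sum_le_sum
  intro i _
  by_cases h : k ≤ (i : ℕ) <;> simp [h, Real.norm_eq_abs, sq_abs] <;> positivity

private lemma tailNorm_add_le {N : ℕ} (k : ℕ) (a b : Euc N) :
    tailNorm k (a + b) ≤ tailNorm k a + tailNorm k b := by
  rw [tailNorm_eq_norm_proj, tailNorm_eq_norm_proj, tailNorm_eq_norm_proj]
  have heq : tailProj N k (a + b) = tailProj N k a + tailProj N k b := by
    ext i
    rw [PiLp.add_apply, tailProj_apply, tailProj_apply, tailProj_apply]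
    by_cases h : k ≤ (i : ℕ) <;> simp [h]
  rw [heq]
  exact norm_add_le _ _

private lemma tailNorm_nonneg {N : ℕ} (k : ℕ) (v : Euc N) : 0 ≤ tailNorm k v :=
  Real.sqrt_nonneg _

/-- uniform bound for the lattice sum `Σ_j (1+|y-x_j|)^{-τ}`. -/
theorem lattice_sum_bound
    (N k : ℕ) (hN : 2 ≤ N) (hk1 : 1 ≤ k) (hk2 : k < N)
    (τ : ℝ) (hτ : (k : ℝ) < τ)
    (P : ℕ → Euc N) (hP : LatticeEnum N k P) :
    ∃ C : ℝ, 0 < C ∧ ∀ L : ℝ, 1 ≤ L → ∀ x ∈ Metric.ball (0 : Euc N) 1, ∀ y : Euc N,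
      (∑' j : ℕ, (1 + ‖y - xc L P x j‖) ^ (-τ)) ≤
        C * (1 + tailNorm k y) ^ ((k : ℝ) - τ) := by
  classical
  have hkN : k ≤ N := le_of_lt hk2
  have hk1' : (1 : ℝ) ≤ (k : ℝ) := by exact_mod_cast hk1
  obtain ⟨Ck, hCk, hBnd⟩ := dimk_bound k τ hτ
  refine ⟨(2 * k) ^ τ * Ck, by positivity, ?_⟩
  intro L hL x hx y
  have hL0 : (0 : ℝ) < L := by linarith
  have hx1 : ‖x‖ < 1 := by
    rwa [Metric.mem_ball, dist_zero_right] at hx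
  set T : ℝ := tailNorm k y with hT
  have hT0 : (0 : ℝ) ≤ T := tailNorm_nonneg k y
  set A : ℝ := 1 + T with hA
  have hA1 : (1 : ℝ) ≤ A := by linarith
  have hA0 : (0 : ℝ) < A := by linarith
  -- lattice membership and integer coordinates
  have hPQ : ∀ j : ℕ, P j ∈ Qlat N k := by
    intro j
    rw [← hP.2.1]
    exact ⟨j, rfl⟩
  set φ : ℕ → (Fin k → ℤ) := fun j i => ⌊P j (Fin.castLE hkN i)⌋ with hφ
  have hcoord : ∀ (j : ℕ) (i : Fin k), P j (Fin.castLE hkN i) = ((φ j i : ℤ) : ℝ) := by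
    intro j i
    obtain ⟨m, hm⟩ := (hPQ j).1 (Fin.castLE hkN i)
    simp [hφ, hm, Int.floor_intCast]
  have hφinj : Function.Injective φ := by
    intro j j' h
    apply hP.1
    ext i
    by_cases hik : (i : ℕ) < k
    · have hcast : Fin.castLE hkN ⟨(i : ℕ), hik⟩ = i := by
        apply Fin.ext
        rfl
      have h1 := hcoord j ⟨(i : ℕ), hik⟩
      have h2 := hcoord j' ⟨(i : ℕ), hik⟩
      rw [hcast] at h1 h2
      rw [h1, h2, congrFun h ⟨(i : ℕ), hik⟩]
    · rw [(hPQ j).2 i (le_of_not_gt hik), (hPQ j').2 i (le_of_not_gt hik)]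
  set z : Euc N := y - x with hz
  set w : Fin k → ℝ := fun i => z (Fin.castLE hkN i) with hw
  -- per-term estimate
  have hterm : ∀ j : ℕ, (1 + ‖y - xc L P x j‖) ^ (-τ) ≤
      (2 * k) ^ τ * (A + ∑ i, |w i + L * (φ j i : ℝ)|) ^ (-τ) := by
    intro j
    have hyx : y - xc L P x j = z + L • P j := by
      rw [xc, hz]
      abel
    set d : ℝ := ‖z + L • P j‖ with hd
    have hd0 : (0 : ℝ) ≤ d := norm_nonneg _
    set Sj : ℝ := ∑ i, |w i + L * (φ j i : ℝ)| with hSj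
    have hSj0 : (0 : ℝ) ≤ Sj := by positivity
    have hcb : ∀ i : Fin k, |w i + L * (φ j i : ℝ)| ≤ d := by
      intro i
      have h1 : (z + L • P j) (Fin.castLE hkN i) = w i + L * (φ j i : ℝ) := by
        rw [hw]
        simp only [PiLp.add_apply, PiLp.smul_apply, smul_eq_mul]
        rw [hcoord j i]
      calc |w i + L * (φ j i : ℝ)| = |(z + L • P j) (Fin.castLE hkN i)| := by rw [h1]
        _ ≤ d := coord_le_norm _ _
    have hSd : Sj ≤ (k : ℝ) * d := by
      rw [hSj]
      calc (∑ i, |w i + L * (φ j i : ℝ)|) ≤ ∑ _i : Fin k, d :=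
            Finset.sum_le_sum (fun i _ => hcb i)
        _ = (k : ℝ) * d := by
            rw [Finset.sum_const, Finset.card_univ, Fintype.card_fin, nsmul_eq_mul]
    have hTd : T - 1 ≤ d := by
      have h1 : T ≤ tailNorm k z + tailNorm k x := by
        have : y = z + x := by rw [hz]; abel
        calc T = tailNorm k (z + x) := by rw [hT, ← this]
          _ ≤ tailNorm k z + tailNorm k x := tailNorm_add_le k z x
      have h2 : tailNorm k x ≤ 1 := le_trans (tailNorm_le_norm k x) (le_of_lt hx1)
      have h3 : tailNorm k (z + L • P j) = tailNorm k z := by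
        rw [tailNorm, tailNorm]
        congr 1
        apply Finset.sum_congr rfl
        intro i _
        by_cases hik : k ≤ (i : ℕ)
        · simp only [hik, if_true]
          have : (P j) i = 0 := (hPQ j).2 i hik
          simp [PiLp.add_apply, PiLp.smul_apply, smul_eq_mul, this]
        · simp [hik]
      have h4 : tailNorm k z ≤ d := by
        rw [← h3]
        exact tailNorm_le_norm k _
      linarith
    have hkey : (A + Sj) / (2 * (k : ℝ)) ≤ 1 + d := by
      rw [div_le_iff₀ (by linarith)]
      rw [hA]
      nlinarith [hSd, hTd, hd0, hT0, hk1', hSj0]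
    have hpos : (0 : ℝ) < (A + Sj) / (2 * (k : ℝ)) := by positivity
    calc (1 + ‖y - xc L P x j‖) ^ (-τ) = (1 + d) ^ (-τ) := by rw [hyx]
      _ ≤ ((A + Sj) / (2 * (k : ℝ))) ^ (-τ) :=
          Real.rpow_le_rpow_of_nonpos hpos hkey (by linarith)
      _ = (2 * (k : ℝ)) ^ τ * (A + Sj) ^ (-τ) := by
          rw [Real.div_rpow (by positivity) (by positivity),
            Real.rpow_neg (x := 2 * (k : ℝ)) (by positivity), div_eq_mul_inv, inv_inv]
          ring
  -- sum over finite sets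
  apply tsum_le_of_sum_le' (by positivity)
  intro s
  calc (∑ j ∈ s, (1 + ‖y - xc L P x j‖) ^ (-τ))
      ≤ ∑ j ∈ s, (2 * (k : ℝ)) ^ τ * (A + ∑ i, |w i + L * (φ j i : ℝ)|) ^ (-τ) :=
        Finset.sum_le_sum (fun j _ => hterm j)
    _ = (2 * (k : ℝ)) ^ τ * ∑ j ∈ s, (A + ∑ i, |w i + L * (φ j i : ℝ)|) ^ (-τ) := by
        rw [Finset.mul_sum]
    _ = (2 * (k : ℝ)) ^ τ *
        ∑ m ∈ s.image φ, (A + ∑ i, |w i + L * (m i : ℝ)|) ^ (-τ) := by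
        congr 1
        rw [Finset.sum_image (fun a _ b _ h => hφinj h)]
    _ ≤ (2 * (k : ℝ)) ^ τ * (Ck * A ^ ((k : ℝ) - τ)) := by
        apply mul_le_mul_of_nonneg_left _ (by positivity)
        exact hBnd A L hA1 hL w (s.image φ)
    _ = (2 * (k : ℝ)) ^ τ * Ck * (1 + tailNorm k y) ^ ((k : ℝ) - τ) := by
        rw [hA, hT]
        ring

end PeriodicCriticalSystem
end
end

section
/- There exist positive constants C_{1,κ} and C_{2,κ} such that for all y ∈ Ω, 0 ≤ PU_{x,μ}(y) ≤ C_{1,κ} Σ_{j=0}^∞ U_{x_j,μ}(y) and 0 ≤ PV_{x,μ}(y) ≤ C_{2,κ} Σ_{j=0}^∞ V_{x_j,μ}(y). -/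
open Real MeasureTheory Filter Topology
open scoped Classical

noncomputable section

namespace PeriodicCriticalSystem

open Metric ENNReal

section AuxLemmas

variable {N : ℕ}

lemma Ncast_ge (hN : 5 ≤ N) : (5:ℝ) ≤ (N:ℝ) := by exact_mod_cast hN

lemma Wb_pos (hN : 5 ≤ N) {μ : ℝ} (hμ : 0 < μ) (x y : Euc N) : 0 < Wb N x μ y := by
  have h5 : (5:ℝ) ≤ (N:ℝ) := by exact_mod_cast hN
  have h1 : (0:ℝ) < (N:ℝ) * ((N:ℝ) - 2) := by nlinarith
  have h2 : (0:ℝ) < 1 + μ ^ 2 * ‖y - x‖ ^ 2 := by positivity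
  unfold Wb
  positivity

lemma tS_sub_one (hN : 5 ≤ N) : tS N - 1 = ((N:ℝ) + 2) / ((N:ℝ) - 2) := by
  have h5 : (5:ℝ) ≤ (N:ℝ) := by exact_mod_cast hN
  have h2 : (N:ℝ) - 2 ≠ 0 := by nlinarith
  unfold tS
  field_simp
  ring

/-- rpow identity for the bubble to the power `tS N - 1`. -/
lemma Wb_rpow (hN : 5 ≤ N) {μ : ℝ} (hμ : 0 < μ) (x z : Euc N) :
    Wb N x μ z ^ (tS N - 1) =
      ((N:ℝ) * ((N:ℝ) - 2)) ^ ((((N:ℝ) - 2) / 4) * (tS N - 1)) *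
        (μ ^ (((N:ℝ) + 2) / 2) * (1 + μ ^ 2 * ‖z - x‖ ^ 2) ^ (-(((N:ℝ) + 2) / 2))) := by
  have h5 : (5:ℝ) ≤ (N:ℝ) := by exact_mod_cast hN
  have hA : (0:ℝ) < (N:ℝ) * ((N:ℝ) - 2) := by nlinarith
  have hD : (0:ℝ) < 1 + μ ^ 2 * ‖z - x‖ ^ 2 := by positivity
  have hq : tS N - 1 = ((N:ℝ) + 2) / ((N:ℝ) - 2) := tS_sub_one hN
  have hpq : (((N:ℝ) - 2) / 2) * (tS N - 1) = ((N:ℝ) + 2) / 2 := by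
    have h2 : (N:ℝ) - 2 ≠ 0 := by nlinarith
    rw [hq]; field_simp
  unfold Wb
  rw [div_rpow (by positivity) (by positivity), mul_rpow (by positivity) (by positivity),
    ← Real.rpow_mul hμ.le, ← Real.rpow_mul hA.le, ← Real.rpow_mul hD.le, hpq,
    Real.rpow_neg hD.le, div_eq_mul_inv]
  ring

/-- lintegral scaling for Haar measure on `Euc N`. -/
lemma lintegral_comp_smul' (g : Euc N → ℝ≥0∞) {R : ℝ} (hR : R ≠ 0) :
    ∫⁻ z : Euc N, g (R • z) = ENNReal.ofReal |(R ^ N)⁻¹| * ∫⁻ z : Euc N, g z := by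
  have h1 : ∫⁻ z : Euc N, g z ∂(Measure.map (fun z : Euc N => R • z) volume) =
      ∫⁻ z : Euc N, g (R • z) :=
    lintegral_map_equiv g (Homeomorph.smul (isUnit_iff_ne_zero.2 hR).unit).toMeasurableEquiv
  rw [← h1, Measure.map_addHaar_smul volume hR, lintegral_smul_measure,
    finrank_euclideanSpace_fin, smul_eq_mul]

lemma lintegral_comp_add (g : Euc N → ℝ≥0∞) (v : Euc N) :
    ∫⁻ z : Euc N, g (z + v) = ∫⁻ z : Euc N, g z :=
  lintegral_add_right_eq_self g v

lemma nontrivial_Euc (hN : 5 ≤ N) : Nontrivial (Euc N) := by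
  have : (⟨0, by omega⟩ : Fin N) = ⟨0, by omega⟩ := rfl
  refine ⟨⟨EuclideanSpace.single ⟨0, by omega⟩ (1:ℝ), 0, ?_⟩⟩
  intro h
  have := congrArg (fun v : Euc N => v ⟨0, by omega⟩) h
  simp [EuclideanSpace.single_apply] at this

/-- finiteness of the unit-ball integral of the Newtonian singularity. -/
lemma J_lt_top (hN : 5 ≤ N) :
    (∫⁻ z in ball (0 : Euc N) 1, ENNReal.ofReal (‖z‖ ^ (-((N:ℝ) - 2)))) < ⊤ := by
  haveI := nontrivial_Euc hN
  have h5 : (5:ℝ) ≤ (N:ℝ) := by exact_mod_cast hN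
  set f : Euc N → ℝ≥0∞ := fun z => ENNReal.ofReal (‖z‖ ^ (-((N:ℝ) - 2))) with hf
  -- shells
  set S : ℕ → Set (Euc N) := fun i => ball (0 : Euc N) ((1/2 : ℝ) ^ i) \ ball 0 ((1/2:ℝ) ^ (i+1))
    with hS
  have hsub : ball (0 : Euc N) 1 ⊆ {0} ∪ ⋃ i, S i := by
    intro z hz
    rcases eq_or_ne z 0 with rfl | hz0
    · exact Set.mem_union_left _ rfl
    refine Set.mem_union_right _ ?_
    have hz1 : ‖z‖ < 1 := by simpa using hz
    have hzpos : (0:ℝ) < ‖z‖ := norm_pos_iff.2 hz0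
    have hex : ∃ n : ℕ, (1/2:ℝ) ^ (n+1) ≤ ‖z‖ := by
      obtain ⟨n, hn⟩ := exists_pow_lt_of_lt_one hzpos (by norm_num : (1/2:ℝ) < 1)
      exact ⟨n, le_of_lt (by
        calc (1/2:ℝ)^(n+1) ≤ (1/2:ℝ)^n := by
              apply pow_le_pow_of_le_one (by norm_num) (by norm_num) (by omega)
          _ < ‖z‖ := hn)⟩
    classical
    set n0 := Nat.find hex with hn0
    have h1 : (1/2:ℝ) ^ (n0+1) ≤ ‖z‖ := Nat.find_spec hex
    have h2 : ‖z‖ < (1/2:ℝ) ^ n0 := by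
      rcases Nat.eq_zero_or_pos n0 with h | h
      · rw [h]; simpa using hz1
      · have hlt := Nat.find_min hex (m := n0 - 1) (by omega)
        push_neg at hlt
        have hne : n0 - 1 + 1 = n0 := by omega
        rwa [hne] at hlt
    refine Set.mem_iUnion.2 ⟨n0, ?_⟩
    constructor
    · simpa using h2
    · simp only [mem_ball, dist_zero_right, not_lt]
      simpa using h1
  calc ∫⁻ z in ball (0 : Euc N) 1, f z ≤ ∫⁻ z in {(0 : Euc N)} ∪ ⋃ i, S i, f z :=
        lintegral_mono_set hsub
    _ ≤ (∫⁻ z in {(0 : Euc N)}, f z) + ∫⁻ z in ⋃ i, S i, f z := lintegral_union_le _ _ _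
    _ ≤ 0 + ∑' i, ∫⁻ z in S i, f z := by
        gcongr
        · have : volume ({(0 : Euc N)}) = 0 := measure_singleton 0
          rw [setLIntegral_measure_zero _ _ this]
        · exact lintegral_iUnion_le _ _
    _ < ⊤ := by
        rw [zero_add]
        -- per-shell bound
        have hshell : ∀ i : ℕ, (∫⁻ z in S i, f z) ≤
            ENNReal.ofReal ((2:ℝ) ^ (N - 2 : ℝ) * (1/4 : ℝ) ^ i) * volume (ball (0:Euc N) 1) := by
          intro i
          have hρ : (0:ℝ) < (1/2:ℝ) ^ (i+1) := by positivity
          have hb : ∀ z ∈ S i, f z ≤ ENNReal.ofReal (((1/2:ℝ) ^ (i+1)) ^ (-((N:ℝ)-2))) := by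
            intro z hz
            have hz1 : (1/2:ℝ) ^ (i+1) ≤ ‖z‖ := by
              have := hz.2
              simp only [mem_ball, dist_zero_right, not_lt] at this
              exact this
            exact ENNReal.ofReal_le_ofReal
              (Real.rpow_le_rpow_of_nonpos hρ hz1 (by linarith))
          calc ∫⁻ z in S i, f z
              ≤ ∫⁻ _ in S i, ENNReal.ofReal (((1/2:ℝ) ^ (i+1)) ^ (-((N:ℝ)-2))) :=
                setLIntegral_mono' (measurableSet_ball.diff measurableSet_ball) hb
            _ = ENNReal.ofReal (((1/2:ℝ) ^ (i+1)) ^ (-((N:ℝ)-2))) * volume (S i) := by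
                rw [setLIntegral_const]
            _ ≤ ENNReal.ofReal (((1/2:ℝ) ^ (i+1)) ^ (-((N:ℝ)-2))) *
                  volume (ball (0:Euc N) ((1/2:ℝ) ^ i)) := by
                gcongr
                exact Set.diff_subset
            _ = ENNReal.ofReal (((1/2:ℝ) ^ (i+1)) ^ (-((N:ℝ)-2))) *
                  (ENNReal.ofReal (((1/2:ℝ) ^ i) ^ N) * volume (ball (0:Euc N) 1)) := by
                rw [Measure.addHaar_ball volume 0 (by positivity),
                  finrank_euclideanSpace_fin]
            _ = ENNReal.ofReal ((2:ℝ) ^ (N - 2 : ℝ) * (1/4 : ℝ) ^ i) * volume (ball (0:Euc N) 1)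
                := by
                rw [← mul_assoc, ← ENNReal.ofReal_mul (by positivity)]
                congr 2
                -- pure real computation
                have e1 : ((1/2:ℝ) ^ (i+1)) = (2:ℝ) ^ (-((i:ℝ)+1)) := by
                  rw [one_div, inv_pow, ← Real.rpow_natCast (2:ℝ) (i+1),
                    ← Real.rpow_neg (by norm_num : (0:ℝ) ≤ 2)]
                  congr 1; push_cast; ring
                have e2 : ((1/2:ℝ) ^ i) = (2:ℝ) ^ (-(i:ℝ)) := by
                  rw [one_div, inv_pow, ← Real.rpow_natCast (2:ℝ) i,
                    ← Real.rpow_neg (by norm_num : (0:ℝ) ≤ 2)]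
                have e3 : ((1/4:ℝ) ^ i) = (2:ℝ) ^ (-(2*(i:ℝ))) := by
                  rw [one_div, inv_pow, (show (4:ℝ) = 2^2 by norm_num), ← pow_mul,
                    ← Real.rpow_natCast (2:ℝ) (2*i),
                    ← Real.rpow_neg (by norm_num : (0:ℝ) ≤ 2)]
                  congr 1; push_cast; ring
                rw [e1, e2, e3, ← Real.rpow_natCast ((2:ℝ) ^ (-(i:ℝ))) N,
                  ← Real.rpow_mul (by norm_num), ← Real.rpow_mul (by norm_num),
                  ← Real.rpow_add (by norm_num), ← Real.rpow_add (by norm_num)]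
                congr 1
                ring
        have hsum : (∑' i, ∫⁻ z in S i, f z) ≤
            ∑' i : ℕ, ENNReal.ofReal ((2:ℝ) ^ (N - 2 : ℝ)) * (ENNReal.ofReal ((1/4:ℝ)) ^ i *
              volume (ball (0:Euc N) 1)) := by
          apply ENNReal.tsum_le_tsum
          intro i
          refine le_trans (hshell i) (le_of_eq ?_)
          rw [ENNReal.ofReal_mul (by positivity), ENNReal.ofReal_pow (by norm_num)]
          ring
        refine lt_of_le_of_lt hsum ?_
        rw [ENNReal.tsum_mul_left, ENNReal.tsum_mul_right, ENNReal.tsum_geometric]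
        have hb1 : volume (ball (0:Euc N) 1) < ⊤ := measure_ball_lt_top
        have : (1 - ENNReal.ofReal (1/4:ℝ))⁻¹ < ⊤ := by
          rw [ENNReal.inv_lt_top]
          simp [ENNReal.ofReal_lt_one]
        exact ENNReal.mul_lt_top ENNReal.ofReal_lt_top
          (ENNReal.mul_lt_top this hb1)

lemma ball_bound (hN : 5 ≤ N) : ∃ cB : ℝ, 0 < cB ∧ ∀ (a : Euc N) (r : ℝ), 0 < r →
    (∫⁻ z in ball a r, ENNReal.ofReal (‖a - z‖ ^ (-((N:ℝ) - 2)))) ≤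
      ENNReal.ofReal (cB * r ^ (2:ℝ)) := by
  set J := ∫⁻ z in ball (0 : Euc N) 1, ENNReal.ofReal (‖z‖ ^ (-((N:ℝ) - 2))) with hJ
  have hJt : J < ⊤ := J_lt_top hN
  refine ⟨J.toReal + 1, by positivity, ?_⟩
  intro a r hr
  set e : ℝ := -((N:ℝ) - 2) with he
  -- step 1: translate
  set H : Euc N → ℝ≥0∞ :=
    (ball (0 : Euc N) r).indicator (fun u => ENNReal.ofReal (‖u‖ ^ e)) with hH
  have step1 : (∫⁻ z in ball a r, ENNReal.ofReal (‖a - z‖ ^ e)) = ∫⁻ z : Euc N, H z := by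
    rw [← lintegral_indicator measurableSet_ball]
    rw [← lintegral_comp_add H (-a)]
    apply lintegral_congr
    intro z
    by_cases hz : z ∈ ball a r
    · have hz' : z + -a ∈ ball (0 : Euc N) r := by
        simp only [mem_ball, dist_zero_right] at *
        rw [← sub_eq_add_neg]
        rwa [← dist_eq_norm]
      rw [Set.indicator_of_mem hz, hH, Set.indicator_of_mem hz']
      congr 2
      rw [← sub_eq_add_neg, norm_sub_rev]
    · have hz' : z + -a ∉ ball (0 : Euc N) r := by
        simp only [mem_ball, dist_zero_right] at *
        rw [← sub_eq_add_neg, ← dist_eq_norm]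
        exact hz
      rw [Set.indicator_of_notMem hz, hH, Set.indicator_of_notMem hz']
  -- step 2: scale
  have hscale : ∫⁻ x : Euc N, H (r • x) = ENNReal.ofReal |(r ^ N)⁻¹| * ∫⁻ z : Euc N, H z :=
    lintegral_comp_smul' H hr.ne'
  have hcomp : ∀ x : Euc N, H (r • x) =
      (ball (0 : Euc N) 1).indicator
        (fun x => ENNReal.ofReal (r ^ e) * ENNReal.ofReal (‖x‖ ^ e)) x := by
    intro x
    by_cases hx : x ∈ ball (0 : Euc N) 1
    · have hx' : r • x ∈ ball (0 : Euc N) r := by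
        simp only [mem_ball, dist_zero_right, norm_smul, Real.norm_eq_abs,
          abs_of_pos hr] at *
        calc r * ‖x‖ < r * 1 := by exact (mul_lt_mul_iff_right₀ hr).2 hx
          _ = r := mul_one r
      rw [hH, Set.indicator_of_mem hx', Set.indicator_of_mem hx]
      rw [norm_smul, Real.norm_eq_abs, abs_of_pos hr,
        Real.mul_rpow hr.le (norm_nonneg x), ENNReal.ofReal_mul (by positivity)]
    · have hx' : r • x ∉ ball (0 : Euc N) r := by
        simp only [mem_ball, dist_zero_right, norm_smul, Real.norm_eq_abs,
          abs_of_pos hr, not_lt] at *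
        calc r = r * 1 := (mul_one r).symm
          _ ≤ r * ‖x‖ := by exact (mul_le_mul_iff_right₀ hr).2 hx
      rw [hH, Set.indicator_of_notMem hx', Set.indicator_of_notMem hx]
  have step2 : ∫⁻ x : Euc N, H (r • x) = ENNReal.ofReal (r ^ e) * J := by
    rw [lintegral_congr hcomp, lintegral_indicator measurableSet_ball,
      lintegral_const_mul' _ _ ENNReal.ofReal_ne_top, hJ]
  -- combine
  have hrN : (0:ℝ) < r ^ N := by positivity
  have hc0 : ENNReal.ofReal |(r ^ N)⁻¹| = (ENNReal.ofReal (r ^ N))⁻¹ := by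
    rw [abs_of_pos (by positivity), ENNReal.ofReal_inv_of_pos hrN]
  have hcne : (ENNReal.ofReal (r ^ N))⁻¹ ≠ 0 := by
    simp [ENNReal.inv_ne_zero]
  have hcnetop : (ENNReal.ofReal (r ^ N))⁻¹ ≠ ⊤ := by
    simp [ENNReal.inv_ne_top, hrN]
  have step3 : (∫⁻ z : Euc N, H z) = ENNReal.ofReal (r ^ N) * (ENNReal.ofReal (r ^ e) * J) := by
    rw [hc0] at hscale
    have := hscale.symm
    calc (∫⁻ z : Euc N, H z)
        = (ENNReal.ofReal (r ^ N)) * ((ENNReal.ofReal (r ^ N))⁻¹ * ∫⁻ z : Euc N, H z) := by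
          rw [← mul_assoc, ENNReal.mul_inv_cancel (by simp [hrN]) ENNReal.ofReal_ne_top, one_mul]
      _ = (ENNReal.ofReal (r ^ N)) * (ENNReal.ofReal (r ^ e) * J) := by
          rw [← hscale, step2]
  rw [step1, step3]
  -- final numeric bound
  have hre : ENNReal.ofReal (r ^ N) * ENNReal.ofReal (r ^ e) = ENNReal.ofReal (r ^ (2:ℝ)) := by
    rw [← ENNReal.ofReal_mul (by positivity)]
    congr 1
    rw [← Real.rpow_natCast r N, ← Real.rpow_add hr]
    congr 1
    rw [he]; ring
  rw [← mul_assoc, hre]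
  have : J = ENNReal.ofReal J.toReal := by rw [ENNReal.ofReal_toReal hJt.ne]
  rw [this, ← ENNReal.ofReal_mul (by positivity)]
  apply ENNReal.ofReal_le_ofReal
  have h2 : (0:ℝ) ≤ r ^ (2:ℝ) := by positivity
  rw [ENNReal.toReal_ofReal ENNReal.toReal_nonneg]
  have h3 : (J.toReal + 1) * r ^ (2:ℝ) - r ^ (2:ℝ) * J.toReal = r ^ (2:ℝ) := by ring
  linarith [h2, h3]

/-- `(1+s²)^(-e) ≤ 2^e (1+s)^(-2e)` for `s ≥ 0`, `e > 0`. -/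
lemma jap_bracket {s e : ℝ} (hs : 0 ≤ s) (he : 0 < e) :
    (1 + s ^ 2) ^ (-e) ≤ 2 ^ e * (1 + s) ^ (-(2 * e)) := by
  have h1 : (0:ℝ) < (1 + s) ^ 2 / 2 := by positivity
  have h2 : (1 + s) ^ 2 / 2 ≤ 1 + s ^ 2 := by nlinarith [sq_nonneg (s - 1)]
  have h3 : (1 + s ^ 2) ^ (-e) ≤ ((1 + s) ^ 2 / 2) ^ (-e) :=
    Real.rpow_le_rpow_of_nonpos h1 h2 (by linarith)
  refine h3.trans (le_of_eq ?_)
  rw [div_rpow (by positivity) (by norm_num), Real.rpow_neg (by positivity),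
    Real.rpow_neg (by norm_num : (0:ℝ) ≤ 2), div_eq_mul_inv, inv_inv,
    ← Real.rpow_natCast (1+s) 2, ← Real.rpow_mul (by positivity),
    Real.rpow_neg (by positivity)]
  push_cast
  ring_nf

set_option maxHeartbeats 1000000 in
/-- key estimate: Newtonian potential of the bubble nonlinearity. -/
lemma key_estimate (hN : 5 ≤ N) : ∃ CN : ℝ, 0 < CN ∧
    ∀ (x a : Euc N) (μ : ℝ), 0 < μ →
    (∫⁻ z : Euc N, ENNReal.ofReal (‖a - z‖ ^ (-((N:ℝ) - 2)) *
        (μ ^ (((N:ℝ) + 2) / 2) * (1 + μ ^ 2 * ‖z - x‖ ^ 2) ^ (-(((N:ℝ) + 2) / 2))))) ≤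
      ENNReal.ofReal (CN * (μ ^ (((N:ℝ) - 2) / 2) *
        (1 + μ ^ 2 * ‖a - x‖ ^ 2) ^ (-(((N:ℝ) - 2) / 2)))) := by
  have h5 : (5:ℝ) ≤ (N:ℝ) := by exact_mod_cast hN
  set d : ℝ := (N:ℝ) with hd
  obtain ⟨cB, hcB, hball⟩ := ball_bound hN
  set IN : ℝ≥0∞ := ∫⁻ u : Euc N, ENNReal.ofReal ((1 + ‖u‖) ^ (-(d + 2))) with hIN
  have hINlt : IN < ⊤ := by
    rw [hIN]
    apply finite_integral_one_add_norm
    rw [finrank_euclideanSpace_fin]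
    linarith
  set cA : ℝ := cB * 2 ^ ((d + 2) / 2) * 2 ^ (d + 2) with hcA
  set cBB : ℝ := 2 ^ (d - 2) * 2 ^ ((d + 2) / 2) * (IN.toReal + 1) with hcBB
  refine ⟨cA + cBB, by positivity, ?_⟩
  intro x a μ hμ
  set t : ℝ := ‖a - x‖ with ht
  have ht0 : 0 ≤ t := norm_nonneg _
  set m : ℝ := 1 + μ * t with hm
  have hm1 : (1:ℝ) ≤ m := by nlinarith
  have hm0 : (0:ℝ) < m := by linarith
  set r : ℝ := m / (2 * μ) with hr
  have hr0 : 0 < r := by positivity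
  set g : Euc N → ℝ := fun z => ‖a - z‖ ^ (-(d - 2)) with hg
  set h : Euc N → ℝ := fun z => μ ^ ((d + 2) / 2) * (1 + μ ^ 2 * ‖z - x‖ ^ 2) ^ (-((d + 2) / 2))
    with hh
  have hg0 : ∀ z, 0 ≤ g z := fun z => by rw [hg]; positivity
  have hh0 : ∀ z, 0 ≤ h z := fun z => by
    rw [hh]; have : (0:ℝ) < 1 + μ ^ 2 * ‖z - x‖ ^ 2 := by positivity
    positivity
  have hsplit : (∫⁻ z : Euc N, ENNReal.ofReal (g z * h z)) =
      (∫⁻ z in ball a r, ENNReal.ofReal (g z * h z)) +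
      (∫⁻ z in (ball a r)ᶜ, ENNReal.ofReal (g z * h z)) :=
    (lintegral_add_compl _ measurableSet_ball).symm
  -- A part
  have hApart : (∫⁻ z in ball a r, ENNReal.ofReal (g z * h z)) ≤
      ENNReal.ofReal (cA * (μ ^ ((d - 2) / 2) * m ^ (-(d - 2)))) := by
    have hhbar : ∀ z ∈ ball a r, h z ≤
        μ ^ ((d + 2) / 2) * 2 ^ ((d + 2) / 2) * 2 ^ (d + 2) * m ^ (-(d + 2)) := by
      intro z hz
      have hdist : ‖a - z‖ < r := by
        rw [← dist_eq_norm, dist_comm]; simpa [dist_eq_norm] using hz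
      have htri : t - r ≤ ‖z - x‖ := by
        have : t ≤ ‖a - z‖ + ‖z - x‖ := by
          calc t = ‖(a - z) + (z - x)‖ := by rw [ht]; congr 1; abel
            _ ≤ ‖a - z‖ + ‖z - x‖ := norm_add_le _ _
        linarith
      have hkey : m / 2 ≤ 1 + μ * ‖z - x‖ := by
        have h1 : μ * (t - r) ≤ μ * ‖z - x‖ := by
          apply mul_le_mul_of_nonneg_left htri hμ.le
        have hμr : μ * r = m / 2 := by rw [hr]; field_simp
        nlinarith [h1]
      have hs := jap_bracket (s := μ * ‖z - x‖)
        (by positivity) (e := (d + 2) / 2) (by positivity)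
      have hb1 : (1 + μ ^ 2 * ‖z - x‖ ^ 2) ^ (-((d + 2) / 2)) ≤
          2 ^ ((d + 2) / 2) * (1 + μ * ‖z - x‖) ^ (-(d + 2)) := by
        have hxx : μ ^ 2 * ‖z - x‖ ^ 2 = (μ * ‖z - x‖) ^ 2 := by ring
        rw [hxx]
        refine hs.trans (le_of_eq ?_)
        congr 2
        ring
      have hb2 : (1 + μ * ‖z - x‖) ^ (-(d + 2)) ≤ (m / 2) ^ (-(d + 2)) :=
        Real.rpow_le_rpow_of_nonpos (by positivity) hkey (by linarith)
      have hb3 : (m / 2) ^ (-(d + 2)) = 2 ^ (d + 2) * m ^ (-(d + 2)) := by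
        rw [Real.rpow_neg (by positivity : (0:ℝ) ≤ m / 2),
          div_rpow hm0.le (by norm_num : (0:ℝ) ≤ 2), inv_div,
          Real.rpow_neg hm0.le, div_eq_mul_inv]
      rw [hh]
      calc μ ^ ((d + 2) / 2) * (1 + μ ^ 2 * ‖z - x‖ ^ 2) ^ (-((d + 2) / 2))
          ≤ μ ^ ((d + 2) / 2) * (2 ^ ((d + 2) / 2) * (1 + μ * ‖z - x‖) ^ (-(d + 2))) := by
            apply mul_le_mul_of_nonneg_left hb1 (by positivity)
        _ ≤ μ ^ ((d + 2) / 2) * (2 ^ ((d + 2) / 2) * ((m / 2) ^ (-(d + 2)))) := by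
            apply mul_le_mul_of_nonneg_left _ (by positivity)
            apply mul_le_mul_of_nonneg_left hb2 (by positivity)
        _ = μ ^ ((d + 2) / 2) * 2 ^ ((d + 2) / 2) * 2 ^ (d + 2) * m ^ (-(d + 2)) := by
            rw [hb3]; ring
    calc (∫⁻ z in ball a r, ENNReal.ofReal (g z * h z))
        ≤ ∫⁻ z in ball a r, ENNReal.ofReal
            ((μ ^ ((d + 2) / 2) * 2 ^ ((d + 2) / 2) * 2 ^ (d + 2) * m ^ (-(d + 2))) * g z) := by
          apply setLIntegral_mono' measurableSet_ball
          intro z hz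
          apply ENNReal.ofReal_le_ofReal
          rw [mul_comm (g z) (h z)]
          exact mul_le_mul_of_nonneg_right (hhbar z hz) (hg0 z)
      _ = ENNReal.ofReal (μ ^ ((d + 2) / 2) * 2 ^ ((d + 2) / 2) * 2 ^ (d + 2) * m ^ (-(d + 2))) *
            ∫⁻ z in ball a r, ENNReal.ofReal (g z) := by
          rw [← lintegral_const_mul' _ _ ENNReal.ofReal_ne_top]
          congr 1
          ext z
          rw [← ENNReal.ofReal_mul (by positivity)]
      _ ≤ ENNReal.ofReal (μ ^ ((d + 2) / 2) * 2 ^ ((d + 2) / 2) * 2 ^ (d + 2) * m ^ (-(d + 2))) *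
            ENNReal.ofReal (cB * r ^ (2:ℝ)) := by
          gcongr
          exact hball a r hr0
      _ ≤ ENNReal.ofReal (cA * (μ ^ ((d - 2) / 2) * m ^ (-(d - 2)))) := by
          rw [← ENNReal.ofReal_mul (by positivity)]
          apply ENNReal.ofReal_le_ofReal
          have hrr : r ^ (2:ℝ) = m ^ (2:ℝ) * (2 * μ) ^ (-(2:ℝ)) := by
            rw [hr, div_rpow hm0.le (by positivity), Real.rpow_neg (by positivity),
              div_eq_mul_inv]
          rw [hrr, hcA]
          have e1 : m ^ (-(d + 2)) * m ^ (2:ℝ) = m ^ (-d) := by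
            rw [← Real.rpow_add hm0]; congr 1; ring
          have e2 : m ^ (-d) ≤ m ^ (-(d - 2)) := by
            apply Real.rpow_le_rpow_of_exponent_le hm1; linarith
          have e3 : (2 * μ) ^ (-(2:ℝ)) = 2 ^ (-(2:ℝ)) * μ ^ (-(2:ℝ)) := by
            rw [Real.mul_rpow (by norm_num) hμ.le]
          have e4 : μ ^ ((d + 2) / 2) * μ ^ (-(2:ℝ)) = μ ^ ((d - 2) / 2) := by
            rw [← Real.rpow_add hμ]; congr 1; ring
          have e5 : (2:ℝ) ^ (-(2:ℝ)) ≤ 1 :=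
            Real.rpow_le_one_of_one_le_of_nonpos (by norm_num) (by norm_num)
          have e6 : (0:ℝ) ≤ 2 ^ ((d + 2) / 2) * 2 ^ (d + 2) * cB := by positivity
          calc μ ^ ((d + 2) / 2) * 2 ^ ((d + 2) / 2) * 2 ^ (d + 2) * m ^ (-(d + 2)) *
                (cB * (m ^ (2:ℝ) * (2 * μ) ^ (-(2:ℝ))))
              = (2 ^ ((d + 2) / 2) * 2 ^ (d + 2) * cB) * ((2:ℝ) ^ (-(2:ℝ)) *
                  ((μ ^ ((d + 2) / 2) * μ ^ (-(2:ℝ))) * (m ^ (-(d + 2)) * m ^ (2:ℝ)))) := by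
                rw [e3]; ring
            _ = (2 ^ ((d + 2) / 2) * 2 ^ (d + 2) * cB) * ((2:ℝ) ^ (-(2:ℝ)) *
                  (μ ^ ((d - 2) / 2) * m ^ (-d))) := by rw [e1, e4]
            _ ≤ (2 ^ ((d + 2) / 2) * 2 ^ (d + 2) * cB) * (1 *
                  (μ ^ ((d - 2) / 2) * m ^ (-(d - 2)))) := by
                apply mul_le_mul_of_nonneg_left _ e6
                have hμn : (0:ℝ) ≤ μ ^ ((d - 2) / 2) := Real.rpow_nonneg hμ.le _
                have h1 : μ ^ ((d - 2) / 2) * m ^ (-d) ≤ μ ^ ((d - 2) / 2) * m ^ (-(d - 2)) :=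
                  mul_le_mul_of_nonneg_left e2 hμn
                have h2 : (0:ℝ) ≤ μ ^ ((d - 2) / 2) * m ^ (-d) := by
                  apply mul_nonneg hμn (Real.rpow_nonneg hm0.le _)
                calc (2:ℝ) ^ (-(2:ℝ)) * (μ ^ ((d - 2) / 2) * m ^ (-d))
                    ≤ 1 * (μ ^ ((d - 2) / 2) * m ^ (-d)) :=
                      mul_le_mul_of_nonneg_right e5 h2
                  _ ≤ 1 * (μ ^ ((d - 2) / 2) * m ^ (-(d - 2))) := by
                      rw [one_mul, one_mul]; exact h1
            _ = cB * 2 ^ ((d + 2) / 2) * 2 ^ (d + 2) * (μ ^ ((d - 2) / 2) * m ^ (-(d - 2))) := by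
                ring
  -- B part
  have hBpart : (∫⁻ z in (ball a r)ᶜ, ENNReal.ofReal (g z * h z)) ≤
      ENNReal.ofReal (cBB * (μ ^ ((d - 2) / 2) * m ^ (-(d - 2)))) := by
    -- full space bound on h
    set F : Euc N → ℝ≥0∞ := fun w => ENNReal.ofReal ((1 + μ * ‖w‖) ^ (-(d + 2))) with hF
    have htrans : (∫⁻ z : Euc N, ENNReal.ofReal ((1 + μ * ‖z - x‖) ^ (-(d + 2)))) =
        ∫⁻ w : Euc N, F w := by
      rw [← lintegral_comp_add F (-x)]
      apply lintegral_congr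
      intro z
      rw [hF, ← sub_eq_add_neg]
    have hscale : (∫⁻ w : Euc N, F w) = ENNReal.ofReal ((μ ^ N)⁻¹) * IN := by
      have h1 : ∫⁻ u : Euc N, F (μ⁻¹ • u) =
          ENNReal.ofReal |((μ⁻¹) ^ N)⁻¹| * ∫⁻ w : Euc N, F w :=
        lintegral_comp_smul' F (inv_ne_zero hμ.ne')
      have h2 : ∀ u : Euc N, F (μ⁻¹ • u) = ENNReal.ofReal ((1 + ‖u‖) ^ (-(d + 2))) := by
        intro u
        show ENNReal.ofReal ((1 + μ * ‖μ⁻¹ • u‖) ^ (-(d + 2))) = _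
        congr 3
        rw [norm_smul, Real.norm_eq_abs, abs_of_pos (by positivity : (0:ℝ) < μ⁻¹)]
        field_simp
      have h3 : (∫⁻ u : Euc N, F (μ⁻¹ • u)) = IN := by
        rw [hIN]; exact lintegral_congr h2
      have h4 : |((μ⁻¹) ^ N)⁻¹| = μ ^ N := by
        rw [← inv_pow, inv_inv, abs_of_pos (by positivity)]
      rw [h3, h4] at h1
      have h5 : ENNReal.ofReal (μ ^ N) ≠ 0 := by
        simp [ENNReal.ofReal_eq_zero]
        positivity
      have h6 : ENNReal.ofReal ((μ ^ N)⁻¹) * ENNReal.ofReal (μ ^ N) = 1 := by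
        rw [← ENNReal.ofReal_mul (by positivity)]
        rw [inv_mul_cancel₀ (by positivity : (μ:ℝ) ^ N ≠ 0)]
        simp
      calc (∫⁻ w : Euc N, F w)
          = ENNReal.ofReal ((μ ^ N)⁻¹) * (ENNReal.ofReal (μ ^ N) * ∫⁻ w : Euc N, F w) := by
            rw [← mul_assoc, h6, one_mul]
        _ = ENNReal.ofReal ((μ ^ N)⁻¹) * IN := by rw [← h1]
    have hfull : (∫⁻ z : Euc N, ENNReal.ofReal (h z)) ≤
        ENNReal.ofReal (μ ^ ((d + 2) / 2) * 2 ^ ((d + 2) / 2) * ((μ ^ N)⁻¹ * IN.toReal)) := by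
      have hpt : ∀ z : Euc N, ENNReal.ofReal (h z) ≤
          ENNReal.ofReal (μ ^ ((d + 2) / 2) * 2 ^ ((d + 2) / 2)) *
            ENNReal.ofReal ((1 + μ * ‖z - x‖) ^ (-(d + 2))) := by
        intro z
        rw [← ENNReal.ofReal_mul (by positivity)]
        apply ENNReal.ofReal_le_ofReal
        show μ ^ ((d + 2) / 2) * (1 + μ ^ 2 * ‖z - x‖ ^ 2) ^ (-((d + 2) / 2)) ≤ _
        have hs := jap_bracket (s := μ * ‖z - x‖) (by positivity) (e := (d + 2) / 2)
          (by positivity)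
        have hxx : μ ^ 2 * ‖z - x‖ ^ 2 = (μ * ‖z - x‖) ^ 2 := by ring
        have h2d : 2 * ((d + 2) / 2) = d + 2 := by ring
        rw [hxx]
        calc μ ^ ((d + 2) / 2) * (1 + (μ * ‖z - x‖) ^ 2) ^ (-((d + 2) / 2))
            ≤ μ ^ ((d + 2) / 2) * (2 ^ ((d + 2) / 2) * (1 + μ * ‖z - x‖) ^ (-(2 * ((d + 2) / 2))))
              := mul_le_mul_of_nonneg_left hs (by positivity)
          _ = μ ^ ((d + 2) / 2) * 2 ^ ((d + 2) / 2) * (1 + μ * ‖z - x‖) ^ (-(d + 2)) := by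
              rw [h2d]; ring
      calc (∫⁻ z : Euc N, ENNReal.ofReal (h z))
          ≤ ∫⁻ z : Euc N, ENNReal.ofReal (μ ^ ((d + 2) / 2) * 2 ^ ((d + 2) / 2)) *
              ENNReal.ofReal ((1 + μ * ‖z - x‖) ^ (-(d + 2))) := lintegral_mono hpt
        _ = ENNReal.ofReal (μ ^ ((d + 2) / 2) * 2 ^ ((d + 2) / 2)) *
              ∫⁻ z : Euc N, ENNReal.ofReal ((1 + μ * ‖z - x‖) ^ (-(d + 2))) :=
            lintegral_const_mul' _ _ ENNReal.ofReal_ne_top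
        _ = ENNReal.ofReal (μ ^ ((d + 2) / 2) * 2 ^ ((d + 2) / 2)) *
              (ENNReal.ofReal ((μ ^ N)⁻¹) * IN) := by rw [htrans, hscale]
        _ = ENNReal.ofReal (μ ^ ((d + 2) / 2) * 2 ^ ((d + 2) / 2) * ((μ ^ N)⁻¹ * IN.toReal)) := by
            conv_lhs => rw [← ENNReal.ofReal_toReal hINlt.ne]
            rw [← ENNReal.ofReal_mul (by positivity), ← ENNReal.ofReal_mul (by positivity)]
    have hgpt : ∀ z ∈ (ball a r)ᶜ, g z ≤ r ^ (-(d - 2)) := by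
      intro z hz
      have : r ≤ ‖a - z‖ := by
        simp only [Set.mem_compl_iff, mem_ball, not_lt] at hz
        rw [← dist_eq_norm, dist_comm]
        exact hz
      rw [hg]
      exact Real.rpow_le_rpow_of_nonpos hr0 this (by linarith)
    calc (∫⁻ z in (ball a r)ᶜ, ENNReal.ofReal (g z * h z))
        ≤ ∫⁻ z in (ball a r)ᶜ, ENNReal.ofReal (r ^ (-(d - 2))) * ENNReal.ofReal (h z) := by
          apply setLIntegral_mono' measurableSet_ball.compl
          intro z hz
          rw [← ENNReal.ofReal_mul (by positivity)]
          apply ENNReal.ofReal_le_ofReal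
          exact mul_le_mul_of_nonneg_right (hgpt z hz) (hh0 z)
      _ ≤ ∫⁻ z : Euc N, ENNReal.ofReal (r ^ (-(d - 2))) * ENNReal.ofReal (h z) :=
          setLIntegral_le_lintegral _ _
      _ = ENNReal.ofReal (r ^ (-(d - 2))) * ∫⁻ z : Euc N, ENNReal.ofReal (h z) :=
          lintegral_const_mul' _ _ ENNReal.ofReal_ne_top
      _ ≤ ENNReal.ofReal (r ^ (-(d - 2))) *
            ENNReal.ofReal (μ ^ ((d + 2) / 2) * 2 ^ ((d + 2) / 2) * ((μ ^ N)⁻¹ * IN.toReal)) := by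
          gcongr
      _ ≤ ENNReal.ofReal (cBB * (μ ^ ((d - 2) / 2) * m ^ (-(d - 2)))) := by
          rw [← ENNReal.ofReal_mul (by positivity)]
          apply ENNReal.ofReal_le_ofReal
          have er : r ^ (-(d - 2)) = 2 ^ (d - 2) * μ ^ (d - 2) * m ^ (-(d - 2)) := by
            rw [hr, Real.rpow_neg (by positivity), div_rpow hm0.le (by positivity), inv_div,
              Real.mul_rpow (by norm_num) hμ.le, Real.rpow_neg hm0.le, div_eq_mul_inv]
          have eμ : (μ ^ N)⁻¹ = μ ^ (-d) := by
            rw [← Real.rpow_natCast μ N, ← Real.rpow_neg hμ.le, hd]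
          have eμ2 : μ ^ (d - 2) * (μ ^ ((d + 2) / 2) * μ ^ (-d)) = μ ^ ((d - 2) / 2) := by
            rw [← Real.rpow_add hμ, ← Real.rpow_add hμ]; congr 1; ring
          rw [er, eμ, hcBB]
          calc 2 ^ (d - 2) * μ ^ (d - 2) * m ^ (-(d - 2)) *
                (μ ^ ((d + 2) / 2) * 2 ^ ((d + 2) / 2) * (μ ^ (-d) * IN.toReal))
              = 2 ^ (d - 2) * 2 ^ ((d + 2) / 2) * IN.toReal *
                  ((μ ^ (d - 2) * (μ ^ ((d + 2) / 2) * μ ^ (-d))) * m ^ (-(d - 2))) := by ring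
            _ = 2 ^ (d - 2) * 2 ^ ((d + 2) / 2) * IN.toReal *
                  (μ ^ ((d - 2) / 2) * m ^ (-(d - 2))) := by rw [eμ2]
            _ ≤ 2 ^ (d - 2) * 2 ^ ((d + 2) / 2) * (IN.toReal + 1) *
                  (μ ^ ((d - 2) / 2) * m ^ (-(d - 2))) := by
                have hXY : (0:ℝ) ≤ μ ^ ((d - 2) / 2) * m ^ (-(d - 2)) :=
                  mul_nonneg (Real.rpow_nonneg hμ.le _) (Real.rpow_nonneg hm0.le _)
                have h27 : 2 ^ (d - 2) * 2 ^ ((d + 2) / 2) * IN.toReal ≤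
                    2 ^ (d - 2) * 2 ^ ((d + 2) / 2) * (IN.toReal + 1) :=
                  mul_le_mul_of_nonneg_left (by linarith) (by positivity)
                exact mul_le_mul_of_nonneg_right h27 hXY
  -- conclusion
  have hintg : (fun z : Euc N => ENNReal.ofReal (‖a - z‖ ^ (-(d - 2)) *
      (μ ^ ((d + 2) / 2) * (1 + μ ^ 2 * ‖z - x‖ ^ 2) ^ (-((d + 2) / 2))))) =
      fun z => ENNReal.ofReal (g z * h z) := rfl
  have hfin : m ^ (-(d - 2)) ≤ (1 + μ ^ 2 * t ^ 2) ^ (-((d - 2) / 2)) := by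
    have hb : (0:ℝ) < 1 + μ ^ 2 * t ^ 2 := by positivity
    have hbm : 1 + μ ^ 2 * t ^ 2 ≤ m ^ 2 := by rw [hm]; nlinarith
    have h1 : (m ^ (2:ℝ)) ^ (-((d - 2) / 2)) ≤ (1 + μ ^ 2 * t ^ 2) ^ (-((d - 2) / 2)) := by
      apply Real.rpow_le_rpow_of_nonpos hb _ (by linarith)
      rw [← Real.rpow_natCast m 2] at hbm
      convert hbm using 2; norm_num
    have h2 : (m ^ (2:ℝ)) ^ (-((d - 2) / 2)) = m ^ (-(d - 2)) := by
      rw [← Real.rpow_mul hm0.le]; congr 1; ring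
    rw [← h2]; exact h1
  calc (∫⁻ z : Euc N, ENNReal.ofReal (‖a - z‖ ^ (-(d - 2)) *
        (μ ^ ((d + 2) / 2) * (1 + μ ^ 2 * ‖z - x‖ ^ 2) ^ (-((d + 2) / 2)))))
      = ∫⁻ z : Euc N, ENNReal.ofReal (g z * h z) := by rw [hintg]
    _ = (∫⁻ z in ball a r, ENNReal.ofReal (g z * h z)) +
        (∫⁻ z in (ball a r)ᶜ, ENNReal.ofReal (g z * h z)) := hsplit
    _ ≤ ENNReal.ofReal (cA * (μ ^ ((d - 2) / 2) * m ^ (-(d - 2)))) +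
        ENNReal.ofReal (cBB * (μ ^ ((d - 2) / 2) * m ^ (-(d - 2)))) := add_le_add hApart hBpart
    _ = ENNReal.ofReal ((cA + cBB) * (μ ^ ((d - 2) / 2) * m ^ (-(d - 2)))) := by
        rw [← ENNReal.ofReal_add (by positivity) (by positivity)]
        congr 1
        ring
    _ ≤ ENNReal.ofReal ((cA + cBB) * (μ ^ ((d - 2) / 2) *
          (1 + μ ^ 2 * t ^ 2) ^ (-((d - 2) / 2)))) := by
        apply ENNReal.ofReal_le_ofReal
        apply mul_le_mul_of_nonneg_left _ (by positivity)
        exact mul_le_mul_of_nonneg_left hfin (Real.rpow_nonneg hμ.le _)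

lemma abs_coord_le_norm (w : Euc N) (i : Fin N) : |w i| ≤ ‖w‖ := by
  rw [EuclideanSpace.norm_eq]
  rw [show |w i| = Real.sqrt (|w i| ^ 2) from (Real.sqrt_sq (abs_nonneg _)).symm]
  apply Real.sqrt_le_sqrt
  rw [sq_abs]
  have h : w i ^ 2 = ‖w i‖ ^ 2 := by rw [Real.norm_eq_abs, sq_abs]
  rw [h]
  exact Finset.single_le_sum (f := fun i => ‖w i‖ ^ 2) (fun i _ => by positivity)
    (Finset.mem_univ i)

lemma summable_one_int {q : ℝ} (hq : 1 < q) :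
    Summable (fun a : ℤ => ((1:ℝ) + |(a:ℝ)|) ^ (-q)) := by
  have hnat : Summable (fun n : ℕ => ((1:ℝ) + (n:ℝ)) ^ (-q)) := by
    have h0 := Real.summable_one_div_nat_rpow.mpr hq
    have h1 := (summable_nat_add_iff 1).mpr h0
    apply h1.congr
    intro n
    rw [Real.rpow_neg (by positivity), one_div]
    congr 2
    push_cast
    ring
  apply Summable.of_nat_of_neg
  · apply hnat.congr
    intro n
    congr 2
    simp
  · apply hnat.congr
    intro n
    congr 2
    simp

lemma summable_prod_int : ∀ (n : ℕ) {q : ℝ}, 1 < q →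
    Summable (fun m : Fin n → ℤ => ∏ i, ((1:ℝ) + |((m i : ℤ) : ℝ)|) ^ (-q)) := by
  intro n
  induction n with
  | zero =>
    intro q hq
    exact Summable.of_finite
  | succ n ih =>
    intro q hq
    have h1 := summable_one_int hq
    have h2 := ih hq
    have h3 : Summable (fun p : ℤ × (Fin n → ℤ) =>
        ((1:ℝ) + |(p.1 : ℝ)|) ^ (-q) * ∏ i, ((1:ℝ) + |((p.2 i : ℤ) : ℝ)|) ^ (-q)) := by
      apply Summable.mul_of_nonneg h1 h2
      · intro a; positivity
      · intro m
        apply Finset.prod_nonneg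
        intro i _
        positivity
    set e : ℤ × (Fin n → ℤ) ≃ (Fin (n+1) → ℤ) := Fin.consEquiv (fun _ : Fin (n+1) => ℤ) with he
    rw [← Equiv.summable_iff e]
    apply h3.congr
    intro p
    simp only [Function.comp_apply]
    have hep : (e p : Fin (n+1) → ℤ) = Fin.cons p.1 p.2 := rfl
    rw [hep, Fin.prod_univ_succ]
    simp [Fin.cons_succ, Fin.cons_zero]

set_option maxHeartbeats 1000000 in
/-- The key lattice summability. -/
lemma lattice_summable (hN : 5 ≤ N) {k : ℕ} (hk1 : 1 ≤ k)
    (hk2 : (k : ℝ) < ((N : ℝ) - 2) / 2) (P : ℕ → Euc N) (hP : LatticeEnum N k P)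
    (v : Euc N) {L μ : ℝ} (hL : 0 < L) (hμ : 0 < μ) :
    Summable (fun j : ℕ => (1 + μ ^ 2 * ‖v + L • P j‖ ^ 2) ^ (-(((N:ℝ) - 2) / 2))) := by
  have h5 : (5:ℝ) ≤ (N:ℝ) := by exact_mod_cast hN
  have hk0 : (0:ℝ) < k := by exact_mod_cast hk1
  have hkN : k < N := by
    by_contra hc
    push_neg at hc
    have : (N:ℝ) ≤ (k:ℝ) := by exact_mod_cast hc
    nlinarith
  have hmem : ∀ j, P j ∈ Qlat N k := by
    intro j
    rw [← hP.2.1]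
    exact Set.mem_range_self j
  have hι : ∀ j (i : Fin k), ∃ m : ℤ, P j ⟨i.1, lt_trans i.2 hkN⟩ = (m : ℝ) := by
    intro j i
    exact (hmem j).1 ⟨i.1, lt_trans i.2 hkN⟩
  classical
  set ι : ℕ → (Fin k → ℤ) := fun j i => Classical.choose (hι j i) with hιd
  have hspec : ∀ j (i : Fin k), P j ⟨i.1, lt_trans i.2 hkN⟩ = ((ι j i : ℤ) : ℝ) :=
    fun j i => Classical.choose_spec (hι j i)
  have hinj : Function.Injective ι := by
    intro j j' hjj
    apply hP.1
    ext i
    by_cases hik : i.1 < k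
    · have e1 := hspec j ⟨i.1, hik⟩
      have e2 := hspec j' ⟨i.1, hik⟩
      have hfin : (⟨(⟨i.1, hik⟩ : Fin k).1, lt_trans (⟨i.1, hik⟩ : Fin k).2 hkN⟩ : Fin N) = i :=
        rfl
      rw [hfin] at e1 e2
      rw [e1, e2, congrFun hjj]
    · push_neg at hik
      rw [(hmem j).2 i hik, (hmem j').2 i hik]
  set q : ℝ := ((N:ℝ) - 2) / k with hqd
  have hq1 : 1 < q := by
    rw [hqd, lt_div_iff₀ hk0]
    nlinarith
  set p : ℝ := ((N:ℝ) - 2) / 2 with hpd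
  have hp0 : 0 < p := by rw [hpd]; linarith
  -- lower bound constant
  set R0 : ℝ := (2 * ‖v‖ + 2) / L with hR0d
  have hR0 : 0 < R0 := by positivity
  set D : ℝ := min (((1 + R0) ^ 2)⁻¹) (μ ^ 2 * (min (L/2) 1) ^ 2) with hDd
  have hmin0 : (0:ℝ) < min (L/2) 1 := lt_min (by positivity) one_pos
  have hD0 : 0 < D := by
    apply lt_min (by positivity)
    positivity
  have hDb : ∀ w : Euc N, D * (1 + ‖w‖) ^ 2 ≤ 1 + μ ^ 2 * ‖v + L • w‖ ^ 2 := by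
    intro w
    have hw0 : (0:ℝ) ≤ ‖w‖ := norm_nonneg w
    by_cases hw : ‖w‖ ≤ R0
    · have h1 : D * (1 + ‖w‖) ^ 2 ≤ ((1 + R0) ^ 2)⁻¹ * (1 + R0) ^ 2 := by
        apply mul_le_mul (min_le_left _ _) (by nlinarith) (by positivity) (by positivity)
      have h2 : ((1 + R0) ^ 2)⁻¹ * (1 + R0) ^ 2 = 1 := by
        field_simp
      nlinarith [sq_nonneg (μ * ‖v + L • w‖), norm_nonneg (v + L • w)]
    · push_neg at hw
      have h0 : ‖L • w‖ ≤ ‖v + L • w‖ + ‖v‖ := by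
        calc ‖L • w‖ = ‖(v + L • w) + (-v)‖ := by congr 1; abel
          _ ≤ ‖v + L • w‖ + ‖-v‖ := norm_add_le _ _
          _ = ‖v + L • w‖ + ‖v‖ := by rw [norm_neg]
      have h1 : L * ‖w‖ - ‖v‖ ≤ ‖v + L • w‖ := by
        rw [norm_smul, Real.norm_eq_abs, abs_of_pos hL] at h0
        linarith
      have h2 : L * R0 / 2 = ‖v‖ + 1 := by
        rw [hR0d]
        field_simp
      have h3 : L * ‖w‖ / 2 + 1 ≤ ‖v + L • w‖ := by nlinarith
      have h4 : min (L/2) 1 * (1 + ‖w‖) ≤ 1 + L * ‖w‖ / 2 := by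
        have hm1 := min_le_left (L/2) 1
        have hm2 := min_le_right (L/2) 1
        nlinarith
      have hvw : min (L/2) 1 * (1 + ‖w‖) ≤ ‖v + L • w‖ := by linarith
      have h5 : D * (1 + ‖w‖) ^ 2 ≤ μ ^ 2 * (min (L/2) 1) ^ 2 * (1 + ‖w‖) ^ 2 :=
        mul_le_mul_of_nonneg_right (min_le_right _ _) (by positivity)
      have h6 : (min (L/2) 1 * (1 + ‖w‖)) ^ 2 ≤ ‖v + L • w‖ ^ 2 := by
        apply pow_le_pow_left₀ (by positivity) hvw
      nlinarith
  -- pointwise comparison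
  have hle : ∀ j : ℕ, (1 + μ ^ 2 * ‖v + L • P j‖ ^ 2) ^ (-p) ≤
      D ^ (-p) * ∏ i : Fin k, ((1:ℝ) + |((ι j i : ℤ) : ℝ)|) ^ (-q) := by
    intro j
    have hbase : (0:ℝ) < D * (1 + ‖P j‖) ^ 2 := by positivity
    have s1 : (1 + μ ^ 2 * ‖v + L • P j‖ ^ 2) ^ (-p) ≤ (D * (1 + ‖P j‖) ^ 2) ^ (-p) :=
      Real.rpow_le_rpow_of_nonpos hbase (hDb (P j)) (by linarith)
    have s2 : (D * (1 + ‖P j‖) ^ 2) ^ (-p) = D ^ (-p) * ((1 + ‖P j‖) ^ 2) ^ (-p) :=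
      Real.mul_rpow hD0.le (by positivity)
    have s3 : ((1 + ‖P j‖) ^ 2) ^ (-p) = (1 + ‖P j‖) ^ (-((N:ℝ) - 2)) := by
      rw [← Real.rpow_natCast (1 + ‖P j‖) 2, ← Real.rpow_mul (by positivity)]
      congr 1
      rw [hpd]
      push_cast
      ring
    have s4 : (1 + ‖P j‖) ^ (-((N:ℝ) - 2)) ≤
        ∏ i : Fin k, ((1:ℝ) + |((ι j i : ℤ) : ℝ)|) ^ (-q) := by
      have hprodpos : (0:ℝ) < ∏ i : Fin k, ((1:ℝ) + |((ι j i : ℤ) : ℝ)|) := by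
        apply Finset.prod_pos
        intro i _
        positivity
      have hprodle : (∏ i : Fin k, ((1:ℝ) + |((ι j i : ℤ) : ℝ)|)) ≤ (1 + ‖P j‖) ^ k := by
        calc (∏ i : Fin k, ((1:ℝ) + |((ι j i : ℤ) : ℝ)|))
            ≤ ∏ _i : Fin k, (1 + ‖P j‖) := by
              apply Finset.prod_le_prod
              · intro i _; positivity
              · intro i _
                have := abs_coord_le_norm (P j) ⟨i.1, lt_trans i.2 hkN⟩
                rw [hspec j i] at this
                linarith
          _ = (1 + ‖P j‖) ^ k := by
              rw [Finset.prod_const, Finset.card_univ, Fintype.card_fin]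
      have anti : ((1 + ‖P j‖) ^ k) ^ (-q) ≤
          (∏ i : Fin k, ((1:ℝ) + |((ι j i : ℤ) : ℝ)|)) ^ (-q) :=
        Real.rpow_le_rpow_of_nonpos hprodpos hprodle (by linarith)
      have e1 : ((1 + ‖P j‖) ^ k) ^ (-q) = (1 + ‖P j‖) ^ (-((N:ℝ) - 2)) := by
        rw [← Real.rpow_natCast (1 + ‖P j‖) k, ← Real.rpow_mul (by positivity)]
        congr 1
        rw [hqd]
        field_simp
      have e2 : (∏ i : Fin k, ((1:ℝ) + |((ι j i : ℤ) : ℝ)|)) ^ (-q) =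
          ∏ i : Fin k, ((1:ℝ) + |((ι j i : ℤ) : ℝ)|) ^ (-q) :=
        (Real.finset_prod_rpow _ _ (fun i _ => by positivity) _).symm
      rw [← e1, ← e2]
      exact anti
    calc (1 + μ ^ 2 * ‖v + L • P j‖ ^ 2) ^ (-p)
        ≤ (D * (1 + ‖P j‖) ^ 2) ^ (-p) := s1
      _ = D ^ (-p) * ((1 + ‖P j‖) ^ 2) ^ (-p) := s2
      _ = D ^ (-p) * (1 + ‖P j‖) ^ (-((N:ℝ) - 2)) := by rw [s3]
      _ ≤ D ^ (-p) * ∏ i : Fin k, ((1:ℝ) + |((ι j i : ℤ) : ℝ)|) ^ (-q) :=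
          mul_le_mul_of_nonneg_left s4 (Real.rpow_nonneg hD0.le _)
  -- assemble
  have hsum : Summable ((fun m : Fin k → ℤ =>
      D ^ (-p) * ∏ i, ((1:ℝ) + |((m i : ℤ) : ℝ)|) ^ (-q)) ∘ ι) :=
    ((summable_prod_int k hq1).mul_left (D ^ (-p))).comp_injective hinj
  apply Summable.of_nonneg_of_le _ _ hsum
  · intro j
    positivity
  · intro j
    exact hle j

lemma sphereArea_pos (hN : 5 ≤ N) : 0 < sphereArea N := by
  haveI := nontrivial_Euc hN
  have h1 : (0:ℝ≥0∞) < volume (ball (0 : Euc N) 1) := measure_ball_pos volume 0 one_pos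
  have h2 : volume (ball (0 : Euc N) 1) < ⊤ := measure_ball_lt_top
  have h3 : 0 < (volume (ball (0 : Euc N) 1)).toReal := ENNReal.toReal_pos h1.ne' h2.ne
  have h4 : (0:ℝ) < N := by
    have : (5:ℝ) ≤ (N:ℝ) := by exact_mod_cast hN
    linarith
  exact mul_pos h4 h3

lemma Γfun_nonneg (hN : 5 ≤ N) (a z : Euc N) : 0 ≤ Γfun N a z := by
  have h5 : (5:ℝ) ≤ (N:ℝ) := by exact_mod_cast hN
  unfold Γfun
  apply one_div_nonneg.mpr
  apply mul_nonneg (mul_nonneg (by linarith) (sphereArea_pos hN).le)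
  exact Real.rpow_nonneg (norm_nonneg _) _

lemma green_nonneg (hN : 5 ≤ N) (L : ℝ) (P : ℕ → Euc N) (y z : Euc N) :
    0 ≤ Green N L P y z :=
  tsum_nonneg (fun j => Γfun_nonneg hN _ _)

/-- `Γfun` in multiplicative form. -/
lemma Γfun_eq (a z : Euc N) :
    Γfun N a z = (((N:ℝ) - 2) * sphereArea N)⁻¹ * ‖a - z‖ ^ (-((N:ℝ) - 2)) := by
  unfold Γfun
  rw [one_div, mul_inv, Real.rpow_neg (norm_nonneg _)]

lemma Wb_mul_form {μ : ℝ} (hμ : 0 < μ) (x a : Euc N) :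
    Wb N x μ a = ((N:ℝ) * ((N:ℝ) - 2)) ^ (((N:ℝ) - 2) / 4) *
      (μ ^ (((N:ℝ) - 2) / 2) * (1 + μ ^ 2 * ‖a - x‖ ^ 2) ^ (-(((N:ℝ) - 2) / 2))) := by
  unfold Wb
  have hD : (0:ℝ) < 1 + μ ^ 2 * ‖a - x‖ ^ 2 := by positivity
  rw [Real.rpow_neg hD.le, div_eq_mul_inv, mul_assoc]

lemma Wb_center (L : ℝ) (P : ℕ → Euc N) (x y : Euc N) (μ : ℝ) (j : ℕ) :
    Wb N x μ (y + L • P j) = Wb N (xc L P x j) μ y := by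
  unfold Wb xc
  congr 3
  rw [show y + L • P j - x = y - (x - L • P j) from by abel]

/-- `ofReal` of a tsum is at most the tsum of `ofReal`s. -/
lemma ofReal_tsum_le (g : ℕ → ℝ) (hg : ∀ j, 0 ≤ g j) :
    ENNReal.ofReal (∑' j, g j) ≤ ∑' j, ENNReal.ofReal (g j) := by
  by_cases hs : Summable g
  · rw [ENNReal.ofReal_tsum_of_nonneg hg hs]
  · rw [tsum_eq_zero_of_not_summable hs]
    simp

/-- Summability of the translated bubbles. -/
lemma wb_summable (hN : 5 ≤ N) {k : ℕ} (hk1 : 1 ≤ k) (hk2 : (k:ℝ) < ((N:ℝ) - 2) / 2)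
    (P : ℕ → Euc N) (hP : LatticeEnum N k P) {L μ : ℝ} (hL : 0 < L) (hμ : 0 < μ)
    (x y : Euc N) : Summable (fun j : ℕ => Wb N (xc L P x j) μ y) := by
  have hs := lattice_summable hN hk1 hk2 P hP (y - x) hL hμ
  have := (hs.mul_left (((N:ℝ) * ((N:ℝ) - 2)) ^ (((N:ℝ) - 2) / 4) * μ ^ (((N:ℝ) - 2) / 2)))
  apply this.congr
  intro j
  rw [Wb_mul_form hμ]
  unfold xc
  rw [show y - (x - L • P j) = y - x + L • P j from by abel]
  ring

set_option maxHeartbeats 1000000 in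
/-- Main generic bound for the Green potential of a bubble power. -/
lemma green_integral_bound (hN : 5 ≤ N) {k : ℕ} (hk1 : 1 ≤ k)
    (hk2 : (k:ℝ) < ((N:ℝ) - 2) / 2) (P : ℕ → Euc N) (hP : LatticeEnum N k P) :
    ∃ C0 : ℝ, 0 < C0 ∧ ∀ (c : ℝ), 0 ≤ c → ∀ (L : ℝ), 0 < L →
      ∀ (x : Euc N) (μ : ℝ), 0 < μ → ∀ y : Euc N,
      (∫ z in strip N k L, Green N L P y z * (c * Wb N x μ z ^ (tS N - 1))) ≤
        C0 * c * ∑' j, Wb N (xc L P x j) μ y := by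
  have h5 : (5:ℝ) ≤ (N:ℝ) := by exact_mod_cast hN
  obtain ⟨CN, hCN, hkey⟩ := key_estimate hN
  set A : ℝ := ((N:ℝ) * ((N:ℝ) - 2)) ^ (((N:ℝ) - 2) / 4) with hA
  have hA0 : 0 < A := by
    rw [hA]; apply Real.rpow_pos_of_pos; nlinarith
  set Apow : ℝ := ((N:ℝ) * ((N:ℝ) - 2)) ^ ((((N:ℝ) - 2) / 4) * (tS N - 1)) with hApow
  have hApow0 : 0 < Apow := by
    rw [hApow]; apply Real.rpow_pos_of_pos; nlinarith
  set cΓ : ℝ := (((N:ℝ) - 2) * sphereArea N)⁻¹ with hcΓ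
  have hcΓ0 : 0 < cΓ := by
    rw [hcΓ]
    apply inv_pos.mpr
    exact mul_pos (by linarith) (sphereArea_pos hN)
  set Cst : ℝ := cΓ * Apow * CN / A with hCst
  have hCst0 : 0 < Cst := by rw [hCst]; positivity
  refine ⟨Cst, hCst0, ?_⟩
  intro c hc L hL x μ hμ y
  set f : Euc N → ℝ := fun z => c * Wb N x μ z ^ (tS N - 1) with hf
  have hf0 : ∀ z, 0 ≤ f z := by
    intro z
    rw [hf]
    exact mul_nonneg hc (Real.rpow_nonneg (Wb_pos hN hμ x z).le _)
  have hWsum : Summable (fun j : ℕ => Wb N (xc L P x j) μ y) :=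
    wb_summable hN hk1 hk2 P hP hL hμ x y
  have hWnn : ∀ j, 0 ≤ Wb N (xc L P x j) μ y := fun j => (Wb_pos hN hμ _ y).le
  have hRHS0 : 0 ≤ Cst * c * ∑' j, Wb N (xc L P x j) μ y :=
    mul_nonneg (mul_nonneg hCst0.le hc) (tsum_nonneg hWnn)
  by_cases hInt : Integrable (fun z => Green N L P y z * f z)
      (volume.restrict (strip N k L))
  swap
  · rw [show (∫ z in strip N k L, Green N L P y z * (c * Wb N x μ z ^ (tS N - 1))) =
        ∫ z in strip N k L, Green N L P y z * f z from rfl, integral_undef hInt]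
    exact hRHS0
  have hGf0 : 0 ≤ᵐ[volume.restrict (strip N k L)] fun z => Green N L P y z * f z :=
    Filter.Eventually.of_forall (fun z => mul_nonneg (green_nonneg hN L P y z) (hf0 z))
  rw [show (∫ z in strip N k L, Green N L P y z * (c * Wb N x μ z ^ (tS N - 1))) =
      ∫ z in strip N k L, Green N L P y z * f z from rfl,
    integral_eq_lintegral_of_nonneg_ae hGf0 hInt.aestronglyMeasurable]
  apply ENNReal.toReal_le_of_le_ofReal hRHS0
  -- the per-j measurable integrand
  set gj : ℕ → Euc N → ℝ≥0∞ :=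
    fun j z => ENNReal.ofReal (Γfun N (y + L • P j) z * f z) with hgj
  have hmeas : ∀ j, Measurable (gj j) := by
    intro j
    simp only [hgj, hf]
    unfold Γfun Wb
    fun_prop
  -- pointwise tsum bound
  have hpt : ∀ z : Euc N, ENNReal.ofReal (Green N L P y z * f z) ≤ ∑' j, gj j z := by
    intro z
    have h1 : Green N L P y z * f z = ∑' j, Γfun N (y + L • P j) z * f z := by
      unfold Green
      rw [tsum_mul_right]
    rw [h1]
    exact ofReal_tsum_le _ (fun j => mul_nonneg (Γfun_nonneg hN _ _) (hf0 z))
  -- per-j integral bound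
  have hperj : ∀ j : ℕ, (∫⁻ z, gj j z) ≤
      ENNReal.ofReal (Cst * c * Wb N (xc L P x j) μ y) := by
    intro j
    set a : Euc N := y + L • P j with ha
    have hrewrite : ∀ z : Euc N, Γfun N a z * f z =
        (cΓ * (c * Apow)) * (‖a - z‖ ^ (-((N:ℝ) - 2)) *
          (μ ^ (((N:ℝ) + 2) / 2) * (1 + μ ^ 2 * ‖z - x‖ ^ 2) ^ (-(((N:ℝ) + 2) / 2)))) := by
      intro z
      simp only [hf]
      rw [Γfun_eq, Wb_rpow hN hμ x z]
      ring
    calc (∫⁻ z, gj j z)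
        = ENNReal.ofReal (cΓ * (c * Apow)) * ∫⁻ z, ENNReal.ofReal (‖a - z‖ ^ (-((N:ℝ) - 2)) *
            (μ ^ (((N:ℝ) + 2) / 2) * (1 + μ ^ 2 * ‖z - x‖ ^ 2) ^ (-(((N:ℝ) + 2) / 2)))) := by
          rw [← lintegral_const_mul' _ _ ENNReal.ofReal_ne_top]
          apply lintegral_congr
          intro z
          simp only [hgj]
          rw [hrewrite z, ENNReal.ofReal_mul (by positivity)]
      _ ≤ ENNReal.ofReal (cΓ * (c * Apow)) * ENNReal.ofReal (CN * (μ ^ (((N:ℝ) - 2) / 2) *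
            (1 + μ ^ 2 * ‖a - x‖ ^ 2) ^ (-(((N:ℝ) - 2) / 2)))) := by
          gcongr
          exact hkey x a μ hμ
      _ = ENNReal.ofReal (Cst * c * Wb N (xc L P x j) μ y) := by
          rw [← ENNReal.ofReal_mul (by positivity)]
          congr 1
          rw [← Wb_center L P x y μ j, Wb_mul_form hμ x a, hCst]
          field_simp
          ring
  -- assemble
  calc (∫⁻ z in strip N k L, ENNReal.ofReal (Green N L P y z * f z))
      ≤ ∫⁻ z in strip N k L, ∑' j, gj j z := lintegral_mono hpt
    _ = ∑' j, ∫⁻ z in strip N k L, gj j z :=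
        lintegral_tsum (fun j => (hmeas j).aemeasurable)
    _ ≤ ∑' j, ∫⁻ z, gj j z :=
        ENNReal.tsum_le_tsum (fun j => setLIntegral_le_lintegral _ _)
    _ ≤ ∑' j, ENNReal.ofReal (Cst * c * Wb N (xc L P x j) μ y) :=
        ENNReal.tsum_le_tsum hperj
    _ = ENNReal.ofReal (∑' j, Cst * c * Wb N (xc L P x j) μ y) :=
        (ENNReal.ofReal_tsum_of_nonneg (fun j => mul_nonneg (mul_nonneg hCst0.le hc) (hWnn j))
          (hWsum.mul_left _)).symm
    _ = ENNReal.ofReal (Cst * c * ∑' j, Wb N (xc L P x j) μ y) := by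
        rw [tsum_mul_left]

end AuxLemmas

set_option maxHeartbeats 1000000 in
/-- Lemma 2.1, pointwise bounds for the projected bubbles. -/
theorem lemma2_1
    (N k : ℕ) (hN : 5 ≤ N) (hk1 : 1 ≤ k) (hk2 : (k : ℝ) < ((N : ℝ) - 2) / 2)
    (s κ : ℝ) (hsκ : SyncConst N s κ)
    (P : ℕ → Euc N) (hP : LatticeEnum N k P) :
    ∃ C1 C2 : ℝ, 0 < C1 ∧ 0 < C2 ∧
      ∀ (L : ℝ), 0 < L → ∀ (x : Euc N) (μ : ℝ), 0 < μ → ∀ y ∈ strip N k L,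
        (0 ≤ PU N k L P s κ x μ y ∧
          PU N k L P s κ x μ y ≤ C1 * ∑' j : ℕ, Ub N s (xc L P x j) μ y) ∧
        (0 ≤ PV N k L P s κ x μ y ∧
          PV N k L P s κ x μ y ≤ C2 * ∑' j : ℕ, Vb N s κ (xc L P x j) μ y) := by
  obtain ⟨hs, hκ, _, _⟩ := hsκ
  have hκs : 0 < κ * s := mul_pos hκ hs
  set cU : ℝ := s ^ (tS N - 1) + 1 / 2 * s ^ (tS N / 2 - 1) * (κ * s) ^ (tS N / 2) with hcU
  set cV : ℝ := (κ * s) ^ (tS N - 1) + 1 / 2 * (κ * s) ^ (tS N / 2 - 1) * s ^ (tS N / 2)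
    with hcV
  have hcU0 : 0 < cU := by
    rw [hcU]
    have h1 : (0:ℝ) < s ^ (tS N - 1) := Real.rpow_pos_of_pos hs _
    have h2 : (0:ℝ) < s ^ (tS N / 2 - 1) := Real.rpow_pos_of_pos hs _
    have h3 : (0:ℝ) < (κ * s) ^ (tS N / 2) := Real.rpow_pos_of_pos hκs _
    nlinarith
  have hcV0 : 0 < cV := by
    rw [hcV]
    have h1 : (0:ℝ) < (κ * s) ^ (tS N - 1) := Real.rpow_pos_of_pos hκs _
    have h2 : (0:ℝ) < (κ * s) ^ (tS N / 2 - 1) := Real.rpow_pos_of_pos hκs _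
    have h3 : (0:ℝ) < s ^ (tS N / 2) := Real.rpow_pos_of_pos hs _
    nlinarith
  obtain ⟨C0, hC0, hbound⟩ := green_integral_bound hN hk1 hk2 P hP
  refine ⟨max (C0 * cU / s) 1, max (C0 * cV / (κ * s)) 1, lt_max_of_lt_right one_pos,
    lt_max_of_lt_right one_pos, ?_⟩
  intro L hL x μ hμ y _
  -- bubble identities
  have hWpos : ∀ z : Euc N, 0 < Wb N x μ z := fun z => Wb_pos hN hμ x z
  have hidentU : ∀ z : Euc N, Ub N s x μ z ^ (tS N - 1) +
      1 / 2 * Ub N s x μ z ^ (tS N / 2 - 1) * Vb N s κ x μ z ^ (tS N / 2) =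
      cU * Wb N x μ z ^ (tS N - 1) := by
    intro z
    have hW := hWpos z
    unfold Ub Vb
    rw [Real.mul_rpow hs.le hW.le, Real.mul_rpow hs.le hW.le,
      Real.mul_rpow hκs.le hW.le]
    have hWq : Wb N x μ z ^ (tS N / 2 - 1) * Wb N x μ z ^ (tS N / 2) =
        Wb N x μ z ^ (tS N - 1) := by
      rw [← Real.rpow_add hW]; congr 1; ring
    rw [hcU, ← hWq]
    ring
  have hidentV : ∀ z : Euc N, Vb N s κ x μ z ^ (tS N - 1) +
      1 / 2 * Vb N s κ x μ z ^ (tS N / 2 - 1) * Ub N s x μ z ^ (tS N / 2) =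
      cV * Wb N x μ z ^ (tS N - 1) := by
    intro z
    have hW := hWpos z
    unfold Ub Vb
    rw [Real.mul_rpow hs.le hW.le, Real.mul_rpow hκs.le hW.le,
      Real.mul_rpow hκs.le hW.le]
    have hWq : Wb N x μ z ^ (tS N / 2 - 1) * Wb N x μ z ^ (tS N / 2) =
        Wb N x μ z ^ (tS N - 1) := by
      rw [← Real.rpow_add hW]; congr 1; ring
    rw [hcV, ← hWq]
    ring
  have hWnn : ∀ j : ℕ, (0:ℝ) ≤ Wb N (xc L P x j) μ y := fun j => (Wb_pos hN hμ _ y).le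
  have hWsumnn : (0:ℝ) ≤ ∑' j, Wb N (xc L P x j) μ y := tsum_nonneg hWnn
  constructor
  · -- PU
    constructor
    · apply integral_nonneg
      intro z
      apply mul_nonneg (green_nonneg hN L P y z)
      rw [hidentU z]
      exact mul_nonneg hcU0.le (Real.rpow_nonneg (hWpos z).le _)
    · have heq : PU N k L P s κ x μ y =
          ∫ z in strip N k L, Green N L P y z * (cU * Wb N x μ z ^ (tS N - 1)) := by
        unfold PU
        congr 1
        funext z
        rw [hidentU z]
      have hsum : (∑' j : ℕ, Ub N s (xc L P x j) μ y) =
          s * ∑' j, Wb N (xc L P x j) μ y := by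
        unfold Ub
        rw [tsum_mul_left]
      rw [heq, hsum]
      have h1 := hbound cU hcU0.le L hL x μ hμ y
      apply h1.trans
      have h2 : C0 * cU ≤ max (C0 * cU / s) 1 * s := by
        have := le_max_left (C0 * cU / s) 1
        calc C0 * cU = (C0 * cU / s) * s := by field_simp
          _ ≤ max (C0 * cU / s) 1 * s := mul_le_mul_of_nonneg_right this hs.le
      calc C0 * cU * ∑' j, Wb N (xc L P x j) μ y
          ≤ (max (C0 * cU / s) 1 * s) * ∑' j, Wb N (xc L P x j) μ y :=
            mul_le_mul_of_nonneg_right h2 hWsumnn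
        _ = max (C0 * cU / s) 1 * (s * ∑' j, Wb N (xc L P x j) μ y) := by ring
  · -- PV
    constructor
    · apply integral_nonneg
      intro z
      apply mul_nonneg (green_nonneg hN L P y z)
      rw [hidentV z]
      exact mul_nonneg hcV0.le (Real.rpow_nonneg (hWpos z).le _)
    · have heq : PV N k L P s κ x μ y =
          ∫ z in strip N k L, Green N L P y z * (cV * Wb N x μ z ^ (tS N - 1)) := by
        unfold PV
        congr 1
        funext z
        rw [hidentV z]
      have hsum : (∑' j : ℕ, Vb N s κ (xc L P x j) μ y) =
          (κ * s) * ∑' j, Wb N (xc L P x j) μ y := by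
        unfold Vb
        rw [← tsum_mul_left]
      rw [heq, hsum]
      have h1 := hbound cV hcV0.le L hL x μ hμ y
      apply h1.trans
      have h2 : C0 * cV ≤ max (C0 * cV / (κ * s)) 1 * (κ * s) := by
        have := le_max_left (C0 * cV / (κ * s)) 1
        calc C0 * cV = (C0 * cV / (κ * s)) * (κ * s) := by field_simp
          _ ≤ max (C0 * cV / (κ * s)) 1 * (κ * s) := mul_le_mul_of_nonneg_right this hκs.le
      calc C0 * cV * ∑' j, Wb N (xc L P x j) μ y
          ≤ (max (C0 * cV / (κ * s)) 1 * (κ * s)) * ∑' j, Wb N (xc L P x j) μ y :=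
            mul_le_mul_of_nonneg_right h2 hWsumnn
        _ = max (C0 * cV / (κ * s)) 1 * ((κ * s) * ∑' j, Wb N (xc L P x j) μ y) := by ring


end PeriodicCriticalSystem
end
end
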